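/- arXiv:2404.04938 — 3 statements merged into one kernel-verified Lean document; each statement's English description precedes it below -/
import Mathlib

section
/- For all measurable sets E, F ⊆ ℝ^d and α ∈ (0,1), the fractional perimeter satisfies the submodularity inequality P_α(E ∩ F) + P_α(E ∪ F) ≤ P_α(E) + P_α(F). -/
open MeasureTheory Filter
open scoped ENNReal symmDiff

/-- The fractional perimeter `P_α(E) = 2 ∫_E ∫_{E^c} |x-y|^{-(d+α)} dx dy`,
with values in `[0,∞]`. -/
noncomputable def fracPer (d : ℕ) (α : ℝ) (E : Set (EuclideanSpace ℝ (Fin d))) : ℝ≥0∞ :=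
  2 * ∫⁻ x in E, ∫⁻ y in Eᶜ, ENNReal.ofReal (‖x - y‖ ^ (-((d : ℝ) + α)))

private lemma indicator_submodular {X : Type*} (E F : Set X) (x y : X) (c : ℝ≥0∞) :
    (E ∩ F).indicator 1 x * (E ∩ F)ᶜ.indicator 1 y * c
      + (E ∪ F).indicator 1 x * (E ∪ F)ᶜ.indicator 1 y * c
    ≤ E.indicator 1 x * Eᶜ.indicator 1 y * c + F.indicator 1 x * Fᶜ.indicator 1 y * c := by
  by_cases hxE : x ∈ E <;> by_cases hxF : x ∈ F <;> by_cases hyE : y ∈ E <;>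
    by_cases hyF : y ∈ F <;>
    simp [Set.indicator, hxE, hxF, hyE, hyF]

private lemma double_lintegral_eq {X : Type*} [MeasurableSpace X] (μ : Measure X)
    (k : X → X → ℝ≥0∞) (S : Set X) (hS : MeasurableSet S) :
    ∫⁻ x in S, ∫⁻ y in Sᶜ, k x y ∂μ ∂μ
      = ∫⁻ x, ∫⁻ y, S.indicator 1 x * Sᶜ.indicator 1 y * k x y ∂μ ∂μ := by
  rw [← lintegral_indicator hS _]
  refine lintegral_congr fun x => ?_
  by_cases hx : x ∈ S
  · rw [Set.indicator_of_mem hx, ← lintegral_indicator hS.compl _]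
    refine lintegral_congr fun y => ?_
    by_cases hy : y ∈ Sᶜ <;> simp [Set.indicator, hx, hy]
  · simp [Set.indicator_of_notMem hx]

private lemma double_lintegral_submodular {X : Type*} [MeasurableSpace X] (μ : Measure X)
    [SigmaFinite μ] (k : X → X → ℝ≥0∞) (hk : Measurable fun p : X × X => k p.1 p.2)
    (E F : Set X) (hE : MeasurableSet E) (hF : MeasurableSet F) :
    (∫⁻ x in E ∩ F, ∫⁻ y in (E ∩ F)ᶜ, k x y ∂μ ∂μ)
      + ∫⁻ x in E ∪ F, ∫⁻ y in (E ∪ F)ᶜ, k x y ∂μ ∂μ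
    ≤ (∫⁻ x in E, ∫⁻ y in Eᶜ, k x y ∂μ ∂μ) + ∫⁻ x in F, ∫⁻ y in Fᶜ, k x y ∂μ ∂μ := by
  have gmeas : ∀ S : Set X, MeasurableSet S →
      Measurable (fun p : X × X => S.indicator 1 p.1 * Sᶜ.indicator 1 p.2 * k p.1 p.2) :=
    fun S hS => (((measurable_one.indicator hS).comp measurable_fst).mul
      ((measurable_one.indicator hS.compl).comp measurable_snd)).mul hk
  have innermeas : ∀ S : Set X, MeasurableSet S →
      Measurable (fun x => ∫⁻ y, S.indicator 1 x * Sᶜ.indicator 1 y * k x y ∂μ) :=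
    fun S hS => (gmeas S hS).lintegral_prod_right'
  rw [double_lintegral_eq μ k _ (hE.inter hF), double_lintegral_eq μ k _ (hE.union hF),
    double_lintegral_eq μ k _ hE, double_lintegral_eq μ k _ hF,
    ← lintegral_add_left (innermeas _ (hE.inter hF)), ← lintegral_add_left (innermeas _ hE)]
  refine lintegral_mono fun x => ?_
  have inner2 : ∀ (S : Set X), MeasurableSet S →
      Measurable (fun y => S.indicator 1 x * Sᶜ.indicator 1 y * k x y) := fun S hS =>
    (measurable_const.mul (measurable_one.indicator hS.compl)).mul
      (hk.comp measurable_prodMk_left)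
  rw [← lintegral_add_left (inner2 _ (hE.inter hF)), ← lintegral_add_left (inner2 _ hE)]
  exact lintegral_mono fun y => indicator_submodular E F x y (k x y)

/-- Submodularity of the fractional perimeter:
`P_α(E ∩ F) + P_α(E ∪ F) ≤ P_α(E) + P_α(F)`. -/
theorem fracPer_submodular (d : ℕ) (α : ℝ) (hα : α ∈ Set.Ioo (0 : ℝ) 1)
    (E F : Set (EuclideanSpace ℝ (Fin d)))
    (hE : MeasurableSet E) (hF : MeasurableSet F) :
    fracPer d α (E ∩ F) + fracPer d α (E ∪ F) ≤ fracPer d α E + fracPer d α F := by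
  unfold fracPer
  rw [← mul_add, ← mul_add]
  refine mul_le_mul_right ?_ 2
  exact double_lintegral_submodular volume
    (fun x y => ENNReal.ofReal (‖x - y‖ ^ (-((d : ℝ) + α))))
    (ENNReal.measurable_ofReal.comp
      (((measurable_fst.sub measurable_snd).norm).pow measurable_const))
    E F hE hF
end

section
/- Let Ω ⊆ ℝ^d be bounded, W ⊂ ℤ finite with elements w_1,…,w_M, α ∈ (0,1). Suppose {w^n} ⊂ ℱ is a sequence of W-valued functions with level sets E_i^n = (w^n)^{-1}({w_i}) satisfying sup_n P_α(E_i^n) < ∞ for each i. Then there exist a subsequence and w ∈ ℱ with level sets E_i such that χ_{E_i^{n_k}} → χ_{E_i} in L^1(Ω) for all i, w^{n_k} → w in L^1(Ω), and the limit sets {E_1,…,E_M} form a partition of Ω up to Lebesgue-null sets. -/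
open MeasureTheory Filter
open scoped ENNReal NNReal symmDiff

/-- Feasibility: `w` is measurable, vanishes outside `Ω` and takes values in
`W = {w_1, …, w_M}` a.e. on `Ω`. -/
def Feasible (d M : ℕ) (Ω : Set (EuclideanSpace ℝ (Fin d))) (wv : Fin M → ℤ)
    (w : EuclideanSpace ℝ (Fin d) → ℝ) : Prop :=
  Measurable w ∧ (∀ x, x ∉ Ω → w x = 0) ∧
    ∀ᵐ x ∂(volume.restrict Ω), ∃ i, w x = (wv i : ℝ)

open scoped Topology

namespace FPC
variable {d : ℕ}

/-- scale -/
noncomputable def sc (k : ℕ) : ℝ := (2⁻¹ : ℝ) ^ k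

lemma sc_pos (k : ℕ) : 0 < sc k := pow_pos (by norm_num) _

/-- dyadic cube -/
def cube (d k : ℕ) (z : Fin d → ℤ) : Set (EuclideanSpace ℝ (Fin d)) :=
  (MeasurableEquiv.toLp 2 (Fin d → ℝ)).symm ⁻¹'
    (Set.univ.pi fun i => Set.Ico ((z i : ℝ) * sc k) (((z i : ℝ) + 1) * sc k))

lemma mem_cube {k : ℕ} {z : Fin d → ℤ} {x : EuclideanSpace ℝ (Fin d)} :
    x ∈ cube d k z ↔ ∀ i, (z i : ℝ) * sc k ≤ x i ∧ x i < ((z i : ℝ) + 1) * sc k := by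
  simp [cube, Set.mem_pi, MeasurableEquiv.toLp]
  exact Iff.rfl

lemma measurableSet_cube {k : ℕ} {z : Fin d → ℤ} : MeasurableSet (cube d k z) :=
  (MeasurableEquiv.toLp 2 (Fin d → ℝ)).symm.measurable
    (MeasurableSet.univ_pi fun _ => measurableSet_Ico)

lemma volume_cube {k : ℕ} {z : Fin d → ℤ} :
    volume (cube d k z) = ENNReal.ofReal (sc k) ^ d := by
  rw [cube, (EuclideanSpace.volume_preserving_symm_measurableEquiv_toLp (Fin d)).measure_preimage
    ((MeasurableSet.univ_pi fun _ => measurableSet_Ico).nullMeasurableSet)]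
  rw [volume_pi_pi]
  simp only [Real.volume_Ico]
  have : ∀ i : Fin d, ENNReal.ofReal (((z i : ℝ) + 1) * sc k - (z i : ℝ) * sc k)
      = ENNReal.ofReal (sc k) := by
    intro i; congr 1; ring
  simp only [this, Finset.prod_const, Finset.card_univ, Fintype.card_fin]

lemma mem_cube_iff_floor {k : ℕ} {z : Fin d → ℤ} {x : EuclideanSpace ℝ (Fin d)} :
    x ∈ cube d k z ↔ ∀ i, z i = ⌊x i / sc k⌋ := by
  rw [mem_cube]
  refine forall_congr' fun i => ?_
  rw [eq_comm, Int.floor_eq_iff]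
  constructor
  · rintro ⟨h1, h2⟩
    exact ⟨(le_div_iff₀ (sc_pos k)).mpr (by linarith), (div_lt_iff₀ (sc_pos k)).mpr (by linarith)⟩
  · rintro ⟨h1, h2⟩
    exact ⟨(le_div_iff₀ (sc_pos k)).mp h1, (div_lt_iff₀ (sc_pos k)).mp h2⟩

lemma iUnion_cube (k : ℕ) : (⋃ z : Fin d → ℤ, cube d k z) = Set.univ := by
  ext x
  simp only [Set.mem_iUnion, Set.mem_univ, iff_true]
  exact ⟨fun i => ⌊x i / sc k⌋, mem_cube_iff_floor.mpr fun i => rfl⟩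

lemma pairwise_disjoint_cube (k : ℕ) :
    Pairwise (Function.onFun Disjoint (cube d k : (Fin d → ℤ) → _)) := by
  intro z z' hne
  rw [Function.onFun, Set.disjoint_left]
  intro x hx hx'
  exact hne (funext fun i => (mem_cube_iff_floor.mp hx i).trans
    (mem_cube_iff_floor.mp hx' i).symm)

lemma dist_le_of_mem_cube {k : ℕ} {z : Fin d → ℤ} {x y : EuclideanSpace ℝ (Fin d)}
    (hx : x ∈ cube d k z) (hy : y ∈ cube d k z) :
    ‖x - y‖ ≤ Real.sqrt d * sc k := by
  have hcoord : ∀ i, |x i - y i| ≤ sc k := by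
    intro i
    obtain ⟨h1, h2⟩ := mem_cube.mp hx i
    obtain ⟨h3, h4⟩ := mem_cube.mp hy i
    rw [abs_le]
    constructor <;> nlinarith
  have : ‖x - y‖ = Real.sqrt (∑ i, ‖x i - y i‖ ^ 2) := by
    rw [EuclideanSpace.norm_eq]
    simp [sub_eq_add_neg]
  rw [this]
  have hsum : (∑ i, ‖x i - y i‖ ^ 2) ≤ (d : ℝ) * sc k ^ 2 := by
    calc (∑ i : Fin d, ‖x i - y i‖ ^ 2) ≤ ∑ i : Fin d, sc k ^ 2 := by
          refine Finset.sum_le_sum fun i _ => ?_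
          rw [Real.norm_eq_abs]
          have := hcoord i
          nlinarith [abs_nonneg (x i - y i), (sc_pos k).le]
      _ = (d : ℝ) * sc k ^ 2 := by simp [Finset.sum_const, mul_comm]
  calc Real.sqrt (∑ i, ‖x i - y i‖ ^ 2) ≤ Real.sqrt ((d : ℝ) * sc k ^ 2) :=
        Real.sqrt_le_sqrt hsum
    _ = Real.sqrt d * sc k := by
        rw [Real.sqrt_mul (Nat.cast_nonneg d), Real.sqrt_sq (sc_pos k).le]

lemma coord_abs_le_norm (x : EuclideanSpace ℝ (Fin d)) (i : Fin d) : |x i| ≤ ‖x‖ := by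
  rw [EuclideanSpace.norm_eq]
  have h1 : |x i| = Real.sqrt (‖x i‖ ^ 2) := by
    rw [Real.sqrt_sq_eq_abs, Real.norm_eq_abs, abs_abs]
  rw [h1]
  apply Real.sqrt_le_sqrt
  exact Finset.single_le_sum (fun j _ => sq_nonneg ‖x j‖) (Finset.mem_univ i)

lemma finite_touching (k : ℕ) {Ω : Set (EuclideanSpace ℝ (Fin d))} {R : ℝ}
    (hΩ : Ω ⊆ Metric.closedBall 0 R) :
    {z : Fin d → ℤ | (cube d k z ∩ Ω).Nonempty}.Finite := by
  have : {z : Fin d → ℤ | (cube d k z ∩ Ω).Nonempty} ⊆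
      Set.univ.pi fun _ : Fin d => {m : ℤ | m ∈ Set.Icc ⌈-R / sc k - 1⌉ ⌊R / sc k⌋} := by
    rintro z ⟨x, hxc, hxΩ⟩ i _
    have hxi : |x i| ≤ R := by
      have := hΩ hxΩ
      simp only [Metric.mem_closedBall, dist_zero_right] at this
      exact (coord_abs_le_norm x i).trans this
    obtain ⟨h1, h2⟩ := mem_cube.mp hxc i
    have hsc := sc_pos k
    have hAbs := abs_le.mp hxi
    constructor
    · rw [Int.ceil_le]
      push_cast
      rw [sub_le_iff_le_add, div_le_iff₀ hsc]
      nlinarith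
    · rw [Int.le_floor]
      rw [le_div_iff₀ hsc]
      nlinarith
  exact Set.Finite.subset (Set.Finite.pi fun i => Set.finite_Icc _ _) this

lemma real_key0 {q a a' c : ℝ} (hq : 0 < q) (hc0 : 0 ≤ c) (hca : c ≤ a) (hca' : c ≤ a')
    (haq : a ≤ q) (ha'q : a' ≤ q) (hlow : a + a' ≤ q + c) (hord : a' ≤ a) :
    (a - c) + (a' - c) ≤ 2*a*(q-a)/q + 2*a'*(q-a')/q + (a - a') := by
  have hmul : q*((a-c)+(a'-c)) ≤ 2*a*(q-a) + 2*a'*(q-a') + q*(a-a') := by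
    rcases le_total (a + a') q with hle | hge
    · have hp : a'*a' ≤ a*(q-a) :=
        mul_le_mul hord (by linarith) (le_trans hc0 hca') (by linarith)
      nlinarith [mul_nonneg hq.le hc0]
    · have hp : (q-a)*(q-a) ≤ (q-a')*a' :=
        mul_le_mul (by linarith) (by linarith) (by linarith) (by linarith)
      nlinarith [mul_nonneg hq.le (by linarith : (0:ℝ) ≤ a + a' - q - c + c)]
  have h2 : (a - c) + (a' - c) ≤ (2*a*(q-a) + 2*a'*(q-a') + q*(a-a'))/q := by
    rw [le_div_iff₀ hq]; linarith
  calc (a - c) + (a' - c) ≤ (2*a*(q-a) + 2*a'*(q-a') + q*(a-a'))/q := h2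
    _ = 2*a*(q-a)/q + 2*a'*(q-a')/q + (a - a') := by field_simp

lemma real_key {q a a' c : ℝ} (hq : 0 < q) (hc0 : 0 ≤ c) (hca : c ≤ a) (hca' : c ≤ a')
    (haq : a ≤ q) (ha'q : a' ≤ q) (hlow : a + a' ≤ q + c) :
    (a - c) + (a' - c) ≤ 2*a*(q-a)/q + 2*a'*(q-a')/q + |a - a'| := by
  rcases le_total a' a with h | h
  · rw [abs_of_nonneg (by linarith)]
    exact real_key0 hq hc0 hca hca' haq ha'q hlow h
  · rw [abs_of_nonpos (by linarith), neg_sub]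
    have := real_key0 hq hc0 hca' hca ha'q haq (by linarith) h
    linarith

lemma cube_sd_bound {d : ℕ} {E F Q : Set (EuclideanSpace ℝ (Fin d))}
    (hE : MeasurableSet E) (hF : MeasurableSet F) (hQ : MeasurableSet Q)
    (hq0 : volume Q ≠ 0) (hqt : volume Q ≠ ⊤) :
    volume ((E ∆ F) ∩ Q) ≤
      2 * volume (E ∩ Q) * volume (Eᶜ ∩ Q) / volume Q
      + 2 * volume (F ∩ Q) * volume (Fᶜ ∩ Q) / volume Q
      + ((volume (E ∩ Q) - volume (F ∩ Q)) + (volume (F ∩ Q) - volume (E ∩ Q))) := by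
  set q := volume Q with hqdef
  have haq : volume (E ∩ Q) ≤ q := measure_mono Set.inter_subset_right
  have ha'q : volume (F ∩ Q) ≤ q := measure_mono Set.inter_subset_right
  have hcq : volume (E ∩ F ∩ Q) ≤ q := measure_mono Set.inter_subset_right
  have hat : volume (E ∩ Q) ≠ ⊤ := (lt_of_le_of_lt haq hqt.lt_top).ne
  have ha't : volume (F ∩ Q) ≠ ⊤ := (lt_of_le_of_lt ha'q hqt.lt_top).ne
  have hct : volume (E ∩ F ∩ Q) ≠ ⊤ := (lt_of_le_of_lt hcq hqt.lt_top).ne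
  have hbt : volume (Eᶜ ∩ Q) ≠ ⊤ :=
    (lt_of_le_of_lt (measure_mono Set.inter_subset_right) hqt.lt_top).ne
  have hb't : volume (Fᶜ ∩ Q) ≠ ⊤ :=
    (lt_of_le_of_lt (measure_mono Set.inter_subset_right) hqt.lt_top).ne
  -- decomposition of the symmetric difference
  have hsplit : (E ∆ F) ∩ Q = ((E ∩ Q) \ (E ∩ F ∩ Q)) ∪ ((F ∩ Q) \ (E ∩ F ∩ Q)) := by
    ext x
    simp only [Set.mem_inter_iff, Set.mem_union, Set.mem_diff, Set.mem_symmDiff]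
    tauto
  have hdisj : Disjoint ((E ∩ Q) \ (E ∩ F ∩ Q)) ((F ∩ Q) \ (E ∩ F ∩ Q)) := by
    rw [Set.disjoint_left]
    rintro x ⟨⟨hxE, hxQ⟩, hxn⟩ ⟨⟨hxF, _⟩, _⟩
    exact hxn ⟨⟨hxE, hxF⟩, hxQ⟩
  have hm1 : MeasurableSet ((F ∩ Q) \ (E ∩ F ∩ Q)) :=
    ((hF.inter hQ).diff ((hE.inter hF).inter hQ))
  have hvol : volume ((E ∆ F) ∩ Q)
      = (volume (E ∩ Q) - volume (E ∩ F ∩ Q)) + (volume (F ∩ Q) - volume (E ∩ F ∩ Q)) := by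
    rw [hsplit, measure_union hdisj hm1,
      measure_diff (Set.inter_subset_inter_left Q Set.inter_subset_left)
        ((hE.inter hF).inter hQ).nullMeasurableSet hct,
      measure_diff (Set.inter_subset_inter_left Q Set.inter_subset_right)
        ((hE.inter hF).inter hQ).nullMeasurableSet hct]
  -- complements
  have hbeq : volume (Eᶜ ∩ Q) = q - volume (E ∩ Q) := by
    have : Eᶜ ∩ Q = Q \ (E ∩ Q) := by ext x; simp [Set.mem_diff]; tauto
    rw [this, measure_diff Set.inter_subset_right (hE.inter hQ).nullMeasurableSet hat]
  have hb'eq : volume (Fᶜ ∩ Q) = q - volume (F ∩ Q) := by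
    have : Fᶜ ∩ Q = Q \ (F ∩ Q) := by ext x; simp [Set.mem_diff]; tauto
    rw [this, measure_diff Set.inter_subset_right (hF.inter hQ).nullMeasurableSet ha't]
  -- inclusion–exclusion lower bound on c
  have hlow : volume (E ∩ Q) + volume (F ∩ Q) ≤ q + volume (E ∩ F ∩ Q) := by
    have h1 : (E ∩ Q) ∩ (F ∩ Q) = E ∩ F ∩ Q := by ext x; simp; tauto
    have h2 := measure_union_add_inter (μ := volume) (E ∩ Q) (hF.inter hQ)
    rw [h1] at h2
    have h3 : volume ((E ∩ Q) ∪ (F ∩ Q)) ≤ q :=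
      measure_mono (Set.union_subset Set.inter_subset_right Set.inter_subset_right)
    calc volume (E ∩ Q) + volume (F ∩ Q) = volume ((E ∩ Q) ∪ (F ∩ Q)) + volume (E ∩ F ∩ Q) :=
          h2.symm
      _ ≤ q + volume (E ∩ F ∩ Q) := by exact add_le_add_left h3 _
  -- pass to real numbers
  set ra := (volume (E ∩ Q)).toReal
  set ra' := (volume (F ∩ Q)).toReal
  set rc := (volume (E ∩ F ∩ Q)).toReal
  set rq := q.toReal
  have hrq : 0 < rq := ENNReal.toReal_pos hq0 hqt
  have hra_q : ra ≤ rq := ENNReal.toReal_mono hqt haq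
  have hra'_q : ra' ≤ rq := ENNReal.toReal_mono hqt ha'q
  have hrc_a : rc ≤ ra := ENNReal.toReal_mono hat
    (measure_mono (Set.inter_subset_inter_left Q Set.inter_subset_left))
  have hrc_a' : rc ≤ ra' := ENNReal.toReal_mono ha't
    (measure_mono (Set.inter_subset_inter_left Q Set.inter_subset_right))
  have hrc0 : 0 ≤ rc := ENNReal.toReal_nonneg
  have hrlow : ra + ra' ≤ rq + rc := by
    have := ENNReal.toReal_mono (by
        exact ENNReal.add_ne_top.mpr ⟨hqt, hct⟩) hlow
    rwa [ENNReal.toReal_add hat ha't, ENNReal.toReal_add hqt hct] at this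
  have hreal := real_key hrq hrc0 hrc_a hrc_a' hra_q hra'_q hrlow
  -- RHS finiteness
  have hdivt : 2 * volume (E ∩ Q) * volume (Eᶜ ∩ Q) / q ≠ ⊤ := by
    refine (ENNReal.div_lt_top ?_ hq0).ne
    exact ENNReal.mul_ne_top (ENNReal.mul_ne_top (by norm_num) hat) hbt
  have hdiv't : 2 * volume (F ∩ Q) * volume (Fᶜ ∩ Q) / q ≠ ⊤ := by
    refine (ENNReal.div_lt_top ?_ hq0).ne
    exact ENNReal.mul_ne_top (ENNReal.mul_ne_top (by norm_num) ha't) hb't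
  have hsub1 : volume (E ∩ Q) - volume (F ∩ Q) ≠ ⊤ :=
    (lt_of_le_of_lt (tsub_le_self) hat.lt_top).ne
  have hsub2 : volume (F ∩ Q) - volume (E ∩ Q) ≠ ⊤ :=
    (lt_of_le_of_lt (tsub_le_self) ha't.lt_top).ne
  rw [hvol]
  rw [← ENNReal.toReal_le_toReal (by
      exact ENNReal.add_ne_top.mpr ⟨(lt_of_le_of_lt tsub_le_self hat.lt_top).ne,
        (lt_of_le_of_lt tsub_le_self ha't.lt_top).ne⟩)
    (by
      refine ENNReal.add_ne_top.mpr ⟨ENNReal.add_ne_top.mpr ⟨hdivt, hdiv't⟩, ?_⟩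
      exact ENNReal.add_ne_top.mpr ⟨hsub1, hsub2⟩)]
  have habs : ((volume (E ∩ Q) - volume (F ∩ Q)) + (volume (F ∩ Q) - volume (E ∩ Q))).toReal
      = |ra - ra'| := by
    rcases le_total (volume (F ∩ Q)) (volume (E ∩ Q)) with h | h
    · rw [tsub_eq_zero_of_le h, add_zero, ENNReal.toReal_sub_of_le h hat,
        abs_of_nonneg (sub_nonneg.mpr (ENNReal.toReal_mono hat h))]
    · rw [tsub_eq_zero_of_le h, zero_add, ENNReal.toReal_sub_of_le h ha't,
        abs_of_nonpos (sub_nonpos.mpr (ENNReal.toReal_mono ha't h)), neg_sub]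
  rw [ENNReal.toReal_add (lt_of_le_of_lt tsub_le_self hat.lt_top).ne
      (lt_of_le_of_lt tsub_le_self ha't.lt_top).ne,
    ENNReal.toReal_add (ENNReal.add_ne_top.mpr ⟨hdivt, hdiv't⟩)
      (ENNReal.add_ne_top.mpr ⟨hsub1, hsub2⟩),
    ENNReal.toReal_add hdivt hdiv't, habs,
    ENNReal.toReal_sub_of_le
      (measure_mono (Set.inter_subset_inter_left Q Set.inter_subset_left)) hat,
    ENNReal.toReal_sub_of_le
      (measure_mono (Set.inter_subset_inter_left Q Set.inter_subset_right)) ha't,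
    ENNReal.toReal_div, ENNReal.toReal_div, ENNReal.toReal_mul, ENNReal.toReal_mul,
    ENNReal.toReal_mul, ENNReal.toReal_mul, ENNReal.toReal_ofNat,
    hbeq, hb'eq, ENNReal.toReal_sub_of_le haq hqt, ENNReal.toReal_sub_of_le ha'q hqt]
  exact hreal

lemma prod_le_kernel {d : ℕ} {α : ℝ} (hα : 0 < α) {k : ℕ} {z : Fin d → ℤ}
    {A B : Set (EuclideanSpace ℝ (Fin d))}
    (hAQ : A ⊆ cube d k z) (hBQ : B ⊆ cube d k z) (hAB : Disjoint A B)
    (hAm : MeasurableSet A) (hBm : MeasurableSet B) :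
    volume A * volume B ≤ ENNReal.ofReal ((Real.sqrt d * sc k) ^ ((d:ℝ) + α)) *
      ∫⁻ x in A, ∫⁻ y in B, ENNReal.ofReal (‖x - y‖ ^ (-((d:ℝ) + α))) := by
  have hp : (0:ℝ) < (d:ℝ) + α := by positivity
  have hct : ENNReal.ofReal ((Real.sqrt d * sc k) ^ ((d:ℝ) + α)) ≠ ⊤ := ENNReal.ofReal_ne_top
  have h1 : volume A * volume B = ∫⁻ x in A, ∫⁻ y in B, (1:ℝ≥0∞) := by
    simp only [setLIntegral_one, setLIntegral_const]
    rw [mul_comm]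
  rw [h1, ← lintegral_const_mul' _ _ hct]
  refine lintegral_mono_ae ((ae_restrict_iff' hAm).mpr (ae_of_all _ fun x hx => ?_))
  rw [← lintegral_const_mul' _ _ hct]
  refine lintegral_mono_ae ((ae_restrict_iff' hBm).mpr (ae_of_all _ fun y hy => ?_))
  have hxy : x ≠ y := by
    rintro rfl
    exact Set.disjoint_left.mp hAB hx hy
  have hr : 0 < ‖x - y‖ := by rwa [norm_pos_iff, sub_ne_zero]
  have hrδ : ‖x - y‖ ≤ Real.sqrt d * sc k := dist_le_of_mem_cube (hAQ hx) (hBQ hy)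
  have hδ : 0 < Real.sqrt d * sc k := lt_of_lt_of_le hr hrδ
  rw [← ENNReal.ofReal_mul (by positivity)]
  rw [ENNReal.one_le_ofReal]
  rw [Real.rpow_neg hr.le, ← div_eq_mul_inv, le_div_iff₀ (Real.rpow_pos_of_pos hr _), one_mul]
  exact Real.rpow_le_rpow hr.le hrδ hp.le

lemma osc_sum {d : ℕ} {α : ℝ} (hα : 0 < α) (k : ℕ) {E : Set (EuclideanSpace ℝ (Fin d))}
    (hE : MeasurableSet E) :
    (∑' z : Fin d → ℤ,
        2 * volume (E ∩ cube d k z) * volume (Eᶜ ∩ cube d k z) / volume (cube d k z))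
      ≤ (ENNReal.ofReal ((Real.sqrt d * sc k) ^ ((d:ℝ) + α)) / ENNReal.ofReal (sc k) ^ d)
        * fracPer d α E := by
  set c := ENNReal.ofReal ((Real.sqrt d * sc k) ^ ((d:ℝ) + α)) with hc
  set qk := ENNReal.ofReal (sc k) ^ d with hqk
  have hq0 : qk ≠ 0 := pow_ne_zero _ (by simp [ENNReal.ofReal_eq_zero]; exact sc_pos k)
  have hqt : qk ≠ ⊤ := by
    exact (ENNReal.pow_ne_top ENNReal.ofReal_ne_top)
  set Iz : (Fin d → ℤ) → ℝ≥0∞ := fun z => ∫⁻ x in E ∩ cube d k z,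
    ∫⁻ y in Eᶜ ∩ cube d k z, ENNReal.ofReal (‖x - y‖ ^ (-((d:ℝ) + α))) with hIz
  have step1 : ∀ z : Fin d → ℤ,
      2 * volume (E ∩ cube d k z) * volume (Eᶜ ∩ cube d k z) / volume (cube d k z)
        ≤ (c / qk) * (2 * Iz z) := by
    intro z
    have hker := prod_le_kernel (α := α) hα (k := k) (z := z)
      (Set.inter_subset_right) (Set.inter_subset_right)
      (disjoint_compl_right.mono Set.inter_subset_left Set.inter_subset_left)
      (hE.inter measurableSet_cube) (hE.compl.inter measurableSet_cube)
    rw [volume_cube, ← hqk]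
    calc 2 * volume (E ∩ cube d k z) * volume (Eᶜ ∩ cube d k z) / qk
        = 2 * (volume (E ∩ cube d k z) * volume (Eᶜ ∩ cube d k z)) / qk := by
          rw [mul_assoc]
      _ ≤ 2 * (c * Iz z) / qk := by
          rw [div_eq_mul_inv, div_eq_mul_inv]
          exact mul_le_mul_left (mul_le_mul_right hker 2) _
      _ = (c / qk) * (2 * Iz z) := by
          rw [div_eq_mul_inv, div_eq_mul_inv]; ring
  calc (∑' z : Fin d → ℤ,
        2 * volume (E ∩ cube d k z) * volume (Eᶜ ∩ cube d k z) / volume (cube d k z))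
      ≤ ∑' z, (c / qk) * (2 * Iz z) := ENNReal.tsum_le_tsum step1
    _ = (c / qk) * (2 * ∑' z, Iz z) := by
        rw [ENNReal.tsum_mul_left, ENNReal.tsum_mul_left]
    _ ≤ (c / qk) * fracPer d α E := by
        refine mul_le_mul_right ?_ _
        rw [fracPer]
        refine mul_le_mul_right ?_ 2
        have hsum : ∑' z, Iz z ≤ ∑' z : Fin d → ℤ, ∫⁻ x in E ∩ cube d k z,
            ∫⁻ y in Eᶜ, ENNReal.ofReal (‖x - y‖ ^ (-((d:ℝ) + α))) := by
          refine ENNReal.tsum_le_tsum fun z => ?_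
          refine lintegral_mono fun x => ?_
          exact lintegral_mono' (Measure.restrict_mono Set.inter_subset_left le_rfl) le_rfl
        refine hsum.trans (le_of_eq ?_)
        have hrE : volume.restrict E
            = Measure.sum fun z : Fin d → ℤ => volume.restrict (E ∩ cube d k z) := by
          rw [← Measure.restrict_iUnion
            ((pairwise_disjoint_cube k).mono fun z z' h =>
              h.mono Set.inter_subset_right Set.inter_subset_right)
            (fun z => hE.inter measurableSet_cube)]
          rw [← Set.inter_iUnion, iUnion_cube, Set.inter_univ]
        rw [hrE, lintegral_sum_measure]


lemma absdiff_triangle (a b L : ℝ≥0∞) :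
    (a - b) + (b - a) ≤ ((a - L) + (L - a)) + ((b - L) + (L - b)) := by
  have h1 : a - b ≤ (a - L) + (L - b) := by
    rw [tsub_le_iff_right]
    calc a ≤ (a - L) + L := le_tsub_add
      _ ≤ (a - L) + ((L - b) + b) := add_le_add_right le_tsub_add _
      _ = (a - L) + (L - b) + b := by ring
  have h2 : b - a ≤ (b - L) + (L - a) := by
    rw [tsub_le_iff_right]
    calc b ≤ (b - L) + L := le_tsub_add
      _ ≤ (b - L) + ((L - a) + a) := add_le_add_right le_tsub_add _
      _ = (b - L) + (L - a) + a := by ring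
  calc (a - b) + (b - a) ≤ ((a - L) + (L - b)) + ((b - L) + (L - a)) := add_le_add h1 h2
    _ = ((a - L) + (L - a)) + ((b - L) + (L - b)) := by ring

lemma ennreal_absdiff_small {a : ℕ → ℝ≥0∞} {L : ℝ≥0∞} (hL : L ≠ ⊤)
    (h : Tendsto a atTop (𝓝 L)) {η : ℝ≥0∞} (hη : η ≠ 0) :
    ∀ᶠ n in atTop, (a n - L) + (L - a n) ≤ η := by
  have h2 : η / 2 ≠ 0 := by
    simp only [ne_eq, ENNReal.div_eq_zero_iff, not_or]
    exact ⟨hη, by norm_num⟩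
  have hub : ∀ᶠ n in atTop, a n ≤ L + η / 2 := by
    have hlt : L < L + η / 2 := ENNReal.lt_add_right hL h2
    filter_upwards [h (gt_mem_nhds hlt)] with n hn
    exact le_of_lt hn
  have hlb : ∀ᶠ n in atTop, L - η / 2 ≤ a n := by
    rcases eq_or_ne L 0 with rfl | hL0
    · exact Eventually.of_forall fun n => by simp
    · rcases le_total L (η / 2) with hc | hc
      · exact Eventually.of_forall fun n => by
          rw [tsub_eq_zero_of_le hc]; exact zero_le
      · have hlt : L - η / 2 < L := ENNReal.sub_lt_self hL hL0 h2
        filter_upwards [h (lt_mem_nhds hlt)] with n hn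
        exact le_of_lt hn
  filter_upwards [hub, hlb] with n h1' h2'
  have e1 : a n - L ≤ η / 2 := tsub_le_iff_right.mpr (by rwa [add_comm] at h1')
  have e2 : L - a n ≤ η / 2 := by
    rw [tsub_le_iff_right]
    calc L ≤ (L - η / 2) + η / 2 := le_tsub_add
      _ ≤ a n + η / 2 := add_le_add_left h2' _
      _ = η / 2 + a n := add_comm _ _
  calc (a n - L) + (L - a n) ≤ η / 2 + η / 2 := add_le_add e1 e2
    _ = η := ENNReal.add_halves η

lemma cauchy_est {d M : ℕ} {α : ℝ} (hα : 0 < α) {Ω : Set (EuclideanSpace ℝ (Fin d))}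
    {R : ℝ} (hΩR : Ω ⊆ Metric.closedBall 0 R)
    {E : ℕ → Set (EuclideanSpace ℝ (Fin d))} (hEm : ∀ n, MeasurableSet (E n))
    (hsd : ∀ n m, E n ∆ E m ⊆ Ω)
    {Cb : ℝ≥0∞} (hCb : Cb ≠ ⊤) (hper : ∀ n, fracPer d α (E n) ≤ Cb)
    (hconv : ∀ k : ℕ, ∀ z : Fin d → ℤ,
      ∃ L, Tendsto (fun n => volume (E n ∩ cube d k z)) atTop (𝓝 L))
    {ε : ℝ≥0∞} (hε : ε ≠ 0) :
    ∃ N, ∀ n ≥ N, ∀ m ≥ N, volume (E n ∆ E m) ≤ ε := by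
  -- the oscillation constant tends to zero
  have hCk : Tendsto (fun k => (ENNReal.ofReal ((Real.sqrt d * sc k) ^ ((d:ℝ) + α))
      / ENNReal.ofReal (sc k) ^ d) * Cb) atTop (𝓝 0) := by
    have hform : ∀ k : ℕ, (ENNReal.ofReal ((Real.sqrt d * sc k) ^ ((d:ℝ) + α))
        / ENNReal.ofReal (sc k) ^ d)
        = ENNReal.ofReal ((Real.sqrt d) ^ ((d:ℝ) + α)) * ENNReal.ofReal (((2:ℝ)⁻¹ ^ α) ^ k) := by
      intro k
      have hs := sc_pos k
      have h1 : (Real.sqrt d * sc k) ^ ((d:ℝ) + α)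
          = (Real.sqrt d) ^ ((d:ℝ) + α) * ((sc k ^ α) * sc k ^ (d:ℕ)) := by
        rw [Real.mul_rpow (Real.sqrt_nonneg d) hs.le]
        congr 1
        rw [Real.rpow_add hs, ← Real.rpow_natCast (sc k) d, mul_comm]
      have h2 : ((2:ℝ)⁻¹ ^ α) ^ k = sc k ^ α := by
        rw [sc, ← Real.rpow_natCast ((2:ℝ)⁻¹ ^ α) k, ← Real.rpow_natCast (2:ℝ)⁻¹ k,
          ← Real.rpow_mul (by norm_num), ← Real.rpow_mul (by norm_num), mul_comm]
      have h0 : ENNReal.ofReal (sc k ^ d) ≠ 0 := by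
        simp only [ne_eq, ENNReal.ofReal_eq_zero, not_le]
        positivity
      rw [h1, h2, ENNReal.ofReal_mul (by positivity), ENNReal.ofReal_mul (by positivity),
        ← ENNReal.ofReal_pow hs.le, mul_div_assoc, mul_div_assoc,
        ENNReal.div_self h0 ENNReal.ofReal_ne_top, mul_one]
    simp only [hform]
    have hr1 : (2:ℝ)⁻¹ ^ α < 1 :=
      Real.rpow_lt_one (by norm_num) (by norm_num) hα
    have hr0 : (0:ℝ) ≤ (2:ℝ)⁻¹ ^ α := Real.rpow_nonneg (by norm_num) _
    have hpow : Tendsto (fun k : ℕ => ENNReal.ofReal (((2:ℝ)⁻¹ ^ α) ^ k)) atTop (𝓝 0) := by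
      have := ENNReal.tendsto_ofReal
        (tendsto_pow_atTop_nhds_zero_of_lt_one hr0 hr1)
      simpa using this
    have hc : Tendsto (fun k : ℕ => ENNReal.ofReal ((Real.sqrt d) ^ ((d:ℝ) + α))
        * ENNReal.ofReal (((2:ℝ)⁻¹ ^ α) ^ k)) atTop (𝓝 0) := by
      have := ENNReal.Tendsto.const_mul hpow
        (Or.inr (ENNReal.ofReal_ne_top : ENNReal.ofReal ((Real.sqrt d) ^ ((d:ℝ) + α)) ≠ ⊤))
      simpa using this
    have := ENNReal.Tendsto.mul_const hc (Or.inr hCb)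
    simpa using this
  have hε4 : ε / 4 ≠ 0 := by
    simp only [ne_eq, ENNReal.div_eq_zero_iff, not_or]
    exact ⟨hε, by norm_num⟩
  obtain ⟨k, hk⟩ : ∃ k, (ENNReal.ofReal ((Real.sqrt d * sc k) ^ ((d:ℝ) + α))
      / ENNReal.ofReal (sc k) ^ d) * Cb ≤ ε / 4 := by
    have := hCk (gt_mem_nhds (pos_iff_ne_zero.mpr hε4))
    rcases (eventually_atTop.mp this) with ⟨k, hk⟩
    exact ⟨k, (hk k le_rfl).le⟩
  -- finitely many relevant cubes
  set S := (finite_touching k hΩR).toFinset with hS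
  set a : (Fin d → ℤ) → ℕ → ℝ≥0∞ := fun z n => volume (E n ∩ cube d k z) with ha
  set η : ℝ≥0∞ := ε / 2 / S.card with hη
  have hqt : volume (cube d k (0 : Fin d → ℤ)) ≠ ⊤ := by
    rw [volume_cube]; exact ENNReal.pow_ne_top ENNReal.ofReal_ne_top
  have hηpos : (S.card : ℝ≥0∞) ≠ 0 → η ≠ 0 := by
    intro hcard
    simp only [hη, ne_eq, ENNReal.div_eq_zero_iff, not_or]
    refine ⟨⟨hε, by norm_num⟩, ?_⟩
    exact ENNReal.natCast_ne_top _
  have hqt' : ∀ z : Fin d → ℤ, volume (cube d k z) ≠ ⊤ := fun z => by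
    rw [volume_cube]; exact ENNReal.pow_ne_top ENNReal.ofReal_ne_top
  have hq0 : ∀ z : Fin d → ℤ, volume (cube d k z) ≠ 0 := fun z => by
    rw [volume_cube]
    exact pow_ne_zero _ (by simp only [ne_eq, ENNReal.ofReal_eq_zero, not_le]; exact sc_pos k)
  choose Lz hLz using hconv k
  have hev : ∀ᶠ n in atTop, ∀ z ∈ S, (a z n - Lz z) + (Lz z - a z n) ≤ η / 2 := by
    rw [eventually_all_finset]
    intro z hz
    have hcard : (S.card : ℝ≥0∞) ≠ 0 := by
      simp only [ne_eq, Nat.cast_eq_zero]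
      exact (Finset.card_pos.mpr ⟨z, hz⟩).ne'
    have hη2 : η / 2 ≠ 0 := by
      simp only [ne_eq, ENNReal.div_eq_zero_iff, not_or]
      exact ⟨hηpos hcard, by norm_num⟩
    have hLt : Lz z ≠ ⊤ := by
      refine ne_top_of_le_ne_top (hqt' z) (le_of_tendsto' (hLz z) fun n => ?_)
      exact measure_mono Set.inter_subset_right
    exact ennreal_absdiff_small hLt (hLz z) hη2
  obtain ⟨N, hN⟩ := eventually_atTop.mp hev
  refine ⟨N, fun n hn m hm => ?_⟩
  have hcover : E n ∆ E m = ⋃ z : Fin d → ℤ, (E n ∆ E m) ∩ cube d k z := by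
    rw [← Set.inter_iUnion, iUnion_cube, Set.inter_univ]
  have hmeas : ∀ z : Fin d → ℤ, MeasurableSet ((E n ∆ E m) ∩ cube d k z) :=
    fun z => ((hEm n).symmDiff (hEm m)).inter measurableSet_cube
  have hdisj' : Pairwise (Function.onFun Disjoint fun z => (E n ∆ E m) ∩ cube d k z) :=
    (pairwise_disjoint_cube k).mono fun z z' h =>
      h.mono Set.inter_subset_right Set.inter_subset_right
  have hdecomp : volume (E n ∆ E m) = ∑' z, volume ((E n ∆ E m) ∩ cube d k z) := by
    conv_lhs => rw [hcover]
    exact measure_iUnion hdisj' hmeas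
  have hzero : ∀ z ∉ S, volume ((E n ∆ E m) ∩ cube d k z) = 0 := by
    intro z hz
    have hempty : (E n ∆ E m) ∩ cube d k z = ∅ := by
      rw [Set.eq_empty_iff_forall_notMem]
      rintro x ⟨hx1, hx2⟩
      exact hz (by
        rw [hS, Set.Finite.mem_toFinset]
        exact ⟨x, hx2, hsd n m hx1⟩)
    simp [hempty]
  rw [hdecomp, tsum_eq_sum hzero]
  have hosc : ∀ n' : ℕ, (∑ z ∈ S, 2 * volume (E n' ∩ cube d k z)
      * volume ((E n')ᶜ ∩ cube d k z) / volume (cube d k z)) ≤ ε / 4 := by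
    intro n'
    calc (∑ z ∈ S, 2 * volume (E n' ∩ cube d k z)
        * volume ((E n')ᶜ ∩ cube d k z) / volume (cube d k z))
        ≤ ∑' z : Fin d → ℤ, 2 * volume (E n' ∩ cube d k z)
          * volume ((E n')ᶜ ∩ cube d k z) / volume (cube d k z) := ENNReal.sum_le_tsum S
      _ ≤ (ENNReal.ofReal ((Real.sqrt d * sc k) ^ ((d:ℝ) + α)) / ENNReal.ofReal (sc k) ^ d)
          * fracPer d α (E n') := osc_sum hα k (hEm n')
      _ ≤ (ENNReal.ofReal ((Real.sqrt d * sc k) ^ ((d:ℝ) + α)) / ENNReal.ofReal (sc k) ^ d)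
          * Cb := mul_le_mul_right (hper n') _
      _ ≤ ε / 4 := hk
  have hD : (∑ z ∈ S, ((a z n - a z m) + (a z m - a z n))) ≤ ε / 2 := by
    have hone : ∀ z ∈ S, (a z n - a z m) + (a z m - a z n) ≤ η := by
      intro z hz
      calc (a z n - a z m) + (a z m - a z n)
          ≤ ((a z n - Lz z) + (Lz z - a z n)) + ((a z m - Lz z) + (Lz z - a z m)) :=
            absdiff_triangle _ _ _
        _ ≤ η / 2 + η / 2 := add_le_add (hN n hn z hz) (hN m hm z hz)
        _ = η := ENNReal.add_halves η
    calc (∑ z ∈ S, ((a z n - a z m) + (a z m - a z n))) ≤ S.card • η :=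
          Finset.sum_le_card_nsmul S _ η hone
      _ = (S.card : ℝ≥0∞) * η := nsmul_eq_mul _ _
      _ ≤ ε / 2 := ENNReal.mul_div_le
  calc (∑ z ∈ S, volume ((E n ∆ E m) ∩ cube d k z))
      ≤ ∑ z ∈ S, (2 * volume (E n ∩ cube d k z)
          * volume ((E n)ᶜ ∩ cube d k z) / volume (cube d k z)
        + 2 * volume (E m ∩ cube d k z)
          * volume ((E m)ᶜ ∩ cube d k z) / volume (cube d k z)
        + ((a z n - a z m) + (a z m - a z n))) :=
        Finset.sum_le_sum fun z _ =>
          cube_sd_bound (hEm n) (hEm m) measurableSet_cube (hq0 z) (hqt' z)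
    _ = (∑ z ∈ S, 2 * volume (E n ∩ cube d k z)
          * volume ((E n)ᶜ ∩ cube d k z) / volume (cube d k z))
        + (∑ z ∈ S, 2 * volume (E m ∩ cube d k z)
          * volume ((E m)ᶜ ∩ cube d k z) / volume (cube d k z))
        + ∑ z ∈ S, ((a z n - a z m) + (a z m - a z n)) := by
        rw [Finset.sum_add_distrib, Finset.sum_add_distrib]
    _ ≤ ε / 4 + ε / 4 + ε / 2 := add_le_add (add_le_add (hosc n) (hosc m)) hD
    _ = ε := by
        have h4 : ε / 4 = ε / 2 / 2 := by
          rw [div_eq_mul_inv, div_eq_mul_inv, div_eq_mul_inv, mul_assoc,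
            ← ENNReal.mul_inv (Or.inl (by norm_num)) (Or.inl (by norm_num))]
          norm_num
        rw [h4, ENNReal.add_halves, ENNReal.add_halves]

lemma null_of_le_tendsto_zero {v : ℝ≥0∞} {f : ℕ → ℝ≥0∞}
    (hf : Tendsto f atTop (𝓝 0)) (h : ∀ l, v ≤ f l) : v = 0 :=
  le_antisymm (ge_of_tendsto hf (Eventually.of_forall h)) zero_le

lemma symmDiff_limset_subset {γ : Type*} (A : ℕ → Set γ) (j : ℕ) :
    ((⋃ J, ⋂ l, ⋂ (_ : J ≤ l), A l) ∆ A j) ⊆ ⋃ l, (A (j + l) ∆ A (j + l + 1)) := by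
  intro x hx
  by_contra hno
  simp only [Set.mem_iUnion, not_exists, Set.mem_symmDiff, not_or, not_and, not_not] at hno
  have hiff : ∀ l : ℕ, (x ∈ A (j + l) ↔ x ∈ A j) := by
    intro l
    induction l with
    | zero => simp
    | succ l ih =>
      rw [← ih]
      have h1 := (hno l).1
      have h2 := (hno l).2
      constructor
      · intro h; exact h2 (by rwa [← Nat.add_assoc] at h)
      · intro h; rw [← Nat.add_assoc]; exact h1 h
  rcases Set.mem_symmDiff.mp hx with ⟨hxF, hxA⟩ | ⟨hxA, hxF⟩
  · obtain ⟨J, hJ⟩ := Set.mem_iUnion.mp hxF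
    simp only [Set.mem_iInter] at hJ
    exact hxA ((hiff J).mp (hJ (j + J) (Nat.le_add_left J j)))
  · refine hxF (Set.mem_iUnion.mpr ⟨j, ?_⟩)
    simp only [Set.mem_iInter]
    intro l hl
    have := (hiff (l - j)).mpr hxA
    rwa [Nat.add_sub_cancel' hl] at this

end FPC

open FPC

/-- Compactness: a sequence of feasible `W`-valued functions whose level sets have uniformly
bounded fractional perimeters admits a subsequence converging in `L¹` (together with the
indicators of its level sets) to a feasible limit whose level sets partition `Ω` up to
null sets. -/
theorem fracPer_compactness (d M : ℕ) (hM : 0 < M) (α : ℝ) (hα : α ∈ Set.Ioo (0 : ℝ) 1)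
    (Ω : Set (EuclideanSpace ℝ (Fin d))) (hΩm : MeasurableSet Ω)
    (hΩb : Bornology.IsBounded Ω)
    (wv : Fin M → ℤ) (hinj : Function.Injective wv)
    (w : ℕ → EuclideanSpace ℝ (Fin d) → ℝ) (hfeas : ∀ n, Feasible d M Ω wv (w n))
    (hbd : ∀ i, ∃ Cb : ℝ≥0∞, Cb < ⊤ ∧ ∀ n, fracPer d α ((w n) ⁻¹' {(wv i : ℝ)}) ≤ Cb) :
    ∃ ns : ℕ → ℕ, StrictMono ns ∧
      ∃ wlim : EuclideanSpace ℝ (Fin d) → ℝ, Feasible d M Ω wv wlim ∧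
        (∀ i, Tendsto
          (fun k => volume (((w (ns k)) ⁻¹' {(wv i : ℝ)}) ∆ (wlim ⁻¹' {(wv i : ℝ)})))
          atTop (nhds 0)) ∧
        Tendsto (fun k => ∫⁻ x, ENNReal.ofReal |w (ns k) x - wlim x|) atTop (nhds 0) ∧
        volume (Ω \ ⋃ i, wlim ⁻¹' {(wv i : ℝ)}) = 0 ∧
        ∀ i j, i ≠ j →
          volume ((wlim ⁻¹' {(wv i : ℝ)}) ∩ (wlim ⁻¹' {(wv j : ℝ)})) = 0 := by
  classical
  set E : ℕ → Fin M → Set (EuclideanSpace ℝ (Fin d)) :=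
    fun n i => (w n) ⁻¹' {(wv i : ℝ)} with hE
  have hEm : ∀ n i, MeasurableSet (E n i) := fun n i => (hfeas n).1 (measurableSet_singleton _)
  obtain ⟨R, hΩR⟩ : ∃ R, Ω ⊆ Metric.closedBall 0 R := hΩb.subset_closedBall 0
  have hcast : ∀ i j : Fin M, (wv i : ℝ) = (wv j : ℝ) → i = j := fun i j h =>
    hinj (by exact_mod_cast h)
  have hsd : ∀ (i : Fin M) (n m : ℕ), E n i ∆ E m i ⊆ Ω := by
    intro i n m x hx
    by_contra hxΩ
    have h1 : w n x = 0 := (hfeas n).2.1 x hxΩ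
    have h2 : w m x = 0 := (hfeas m).2.1 x hxΩ
    rcases Set.mem_symmDiff.mp hx with ⟨ha, hb⟩ | ⟨ha, hb⟩
    · refine hb ?_
      simp only [hE, Set.mem_preimage, Set.mem_singleton_iff] at ha ⊢
      rw [h2, ← h1]; exact ha
    · refine hb ?_
      simp only [hE, Set.mem_preimage, Set.mem_singleton_iff] at ha ⊢
      rw [h1, ← h2]; exact ha
  -- first extraction: all cube measures converge
  obtain ⟨ns1, hns1, hconv⟩ : ∃ ns1 : ℕ → ℕ, StrictMono ns1 ∧
      ∀ (i : Fin M) (k : ℕ) (z : Fin d → ℤ),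
        ∃ L, Tendsto (fun n => volume (E (ns1 n) i ∩ cube d k z)) atTop (𝓝 L) := by
    obtain ⟨L, -, φ0, hφ0, hconv0⟩ := (isCompact_univ :
        IsCompact (Set.univ : Set ((Fin M × ℕ × (Fin d → ℤ)) → ℝ≥0∞))).tendsto_subseq
      (x := fun n (p : Fin M × ℕ × (Fin d → ℤ)) => volume (E n p.1 ∩ cube d p.2.1 p.2.2))
      (fun _ => Set.mem_univ _)
    exact ⟨φ0, hφ0, fun i k z => ⟨L (i, k, z), (tendsto_pi_nhds.mp hconv0) (i, k, z)⟩⟩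
  -- Cauchy property for each level along ns1
  have hcauchy : ∀ (i : Fin M) (ε : ℝ≥0∞), ε ≠ 0 →
      ∃ N, ∀ n ≥ N, ∀ m ≥ N, volume (E (ns1 n) i ∆ E (ns1 m) i) ≤ ε := by
    intro i ε hε
    obtain ⟨Cb, hCb, hand⟩ := hbd i
    exact cauchy_est (M := M) hα.1 hΩR (fun n => hEm (ns1 n) i)
      (fun n m => hsd i (ns1 n) (ns1 m)) hCb.ne (fun n => hand (ns1 n)) (hconv i) hε
  have hgeom : ∀ j : ℕ, ∃ N, ∀ n ≥ N, ∀ m ≥ N, ∀ i,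
      volume (E (ns1 n) i ∆ E (ns1 m) i) ≤ (2⁻¹ : ℝ≥0∞) ^ j := by
    intro j
    have hpow : ((2⁻¹ : ℝ≥0∞) ^ j) ≠ 0 := by
      apply pow_ne_zero; simp
    choose Ni hNi using fun i => hcauchy i _ hpow
    refine ⟨Finset.univ.sup Ni, fun n hn m hm i => ?_⟩
    exact hNi i n (le_trans (Finset.le_sup (Finset.mem_univ i)) hn)
      m (le_trans (Finset.le_sup (Finset.mem_univ i)) hm)
  choose NN hNN using hgeom
  set ms : ℕ → ℕ := fun j => Nat.rec (NN 0) (fun j' prev => max (prev + 1) (NN (j' + 1))) j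
    with hms
  have hms_succ : ∀ j, ms (j+1) = max (ms j + 1) (NN (j+1)) := fun j => rfl
  have hms_mono : StrictMono ms := strictMono_nat_of_lt_succ fun j => by
    rw [hms_succ]; exact lt_of_lt_of_le (Nat.lt_succ_self _) (le_max_left _ _)
  have hms_ge : ∀ j, NN j ≤ ms j := by
    intro j
    cases j with
    | zero => exact le_rfl
    | succ j' => rw [hms_succ]; exact le_max_right _ _
  set φ : ℕ → ℕ := fun j => ns1 (ms j) with hφdef
  have hφmono : StrictMono φ := hns1.comp hms_mono
  have hstep : ∀ (i : Fin M) (j : ℕ),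
      volume (E (φ j) i ∆ E (φ (j+1)) i) ≤ (2⁻¹ : ℝ≥0∞) ^ j := by
    intro i j
    exact hNN j (ms j) (hms_ge j) (ms (j+1))
      (le_trans (hms_ge j) (le_of_lt (hms_mono (Nat.lt_succ_self j)))) i
  -- limit sets
  set F : Fin M → Set (EuclideanSpace ℝ (Fin d)) :=
    fun i => ⋃ J, ⋂ l, ⋂ (_ : J ≤ l), E (φ l) i with hF
  have hFm : ∀ i, MeasurableSet (F i) :=
    fun i => MeasurableSet.iUnion fun J => MeasurableSet.iInter fun l =>
      MeasurableSet.iInter fun _ => hEm _ i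
  have hkey : ∀ (i : Fin M) (j : ℕ), volume (E (φ j) i ∆ F i) ≤ 2 * (2⁻¹ : ℝ≥0∞) ^ j := by
    intro i j
    have hsub := symmDiff_limset_subset (fun l => E (φ l) i) j
    have h1 : volume (E (φ j) i ∆ F i)
        ≤ ∑' l : ℕ, volume (E (φ (j+l)) i ∆ E (φ (j+l+1)) i) := by
      rw [symmDiff_comm]
      exact le_trans (measure_mono hsub) (measure_iUnion_le _)
    refine h1.trans ?_
    calc (∑' l : ℕ, volume (E (φ (j+l)) i ∆ E (φ (j+l+1)) i))
        ≤ ∑' l : ℕ, (2⁻¹ : ℝ≥0∞) ^ (j + l) := ENNReal.tsum_le_tsum fun l => hstep i (j+l)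
      _ = (2⁻¹ : ℝ≥0∞) ^ j * ∑' l : ℕ, (2⁻¹ : ℝ≥0∞) ^ l := by
          simp_rw [pow_add]; rw [ENNReal.tsum_mul_left]
      _ = (2⁻¹ : ℝ≥0∞) ^ j * 2 := by
          rw [ENNReal.tsum_geometric, ENNReal.one_sub_inv_two, inv_inv]
      _ = 2 * (2⁻¹ : ℝ≥0∞) ^ j := mul_comm _ _
  have hpow0 : Tendsto (fun j : ℕ => 2 * (2⁻¹ : ℝ≥0∞) ^ j) atTop (𝓝 0) := by
    have h1 : Tendsto (fun j : ℕ => (2⁻¹ : ℝ≥0∞) ^ j) atTop (𝓝 0) :=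
      ENNReal.tendsto_pow_atTop_nhds_zero_of_lt_one (by
        rw [ENNReal.inv_lt_one]
        exact ENNReal.one_lt_two)
    have := ENNReal.Tendsto.const_mul h1 (Or.inr (by norm_num : (2:ℝ≥0∞) ≠ ⊤))
    simpa using this
  have htendF : ∀ i, Tendsto (fun j => volume (E (φ j) i ∆ F i)) atTop (𝓝 0) :=
    fun i => tendsto_of_tendsto_of_tendsto_of_le_of_le tendsto_const_nhds hpow0
      (fun j => zero_le) (fun j => hkey i j)
  -- level sets at distinct levels are disjoint
  have hdisjE : ∀ (n : ℕ) (i j : Fin M), i ≠ j → E n i ∩ E n j = ∅ := by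
    intro n i j hij
    rw [Set.eq_empty_iff_forall_notMem]
    rintro x ⟨hxi, hxj⟩
    simp only [hE, Set.mem_preimage, Set.mem_singleton_iff] at hxi hxj
    exact hij (hcast i j (hxi.symm.trans hxj))
  have hFdisj : ∀ i j : Fin M, i ≠ j → volume (F i ∩ F j) = 0 := by
    intro i j hij
    refine null_of_le_tendsto_zero (by simpa using hpow0.add hpow0 :
      Tendsto (fun l : ℕ => 2 * (2⁻¹:ℝ≥0∞)^l + 2 * (2⁻¹:ℝ≥0∞)^l) atTop (𝓝 0)) fun l => ?_
    have hsub : F i ∩ F j ⊆ (E (φ l) i ∆ F i) ∪ (E (φ l) j ∆ F j) := by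
      rintro x ⟨hxi, hxj⟩
      by_cases hEi : x ∈ E (φ l) i
      · by_cases hEj : x ∈ E (φ l) j
        · have hmem := Set.mem_inter hEi hEj
          rw [hdisjE (φ l) i j hij] at hmem
          exact absurd hmem (Set.notMem_empty x)
        · exact Or.inr (Set.mem_symmDiff.mpr (Or.inr ⟨hxj, hEj⟩))
      · exact Or.inl (Set.mem_symmDiff.mpr (Or.inr ⟨hxi, hEi⟩))
    calc volume (F i ∩ F j) ≤ volume ((E (φ l) i ∆ F i) ∪ (E (φ l) j ∆ F j)) :=
          measure_mono hsub
      _ ≤ _ := (measure_union_le _ _).trans (add_le_add (hkey i l) (hkey j l))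
  -- a.e. coverage of Ω by the E's and hence by the F's
  have hcovE : ∀ n, volume (Ω \ ⋃ i, E n i) = 0 := by
    intro n
    have hae := (hfeas n).2.2
    rw [ae_restrict_iff' hΩm, ae_iff] at hae
    refine measure_mono_null ?_ hae
    rintro x ⟨hxΩ, hxn⟩
    simp only [Set.mem_iUnion, not_exists] at hxn
    simp only [Set.mem_setOf_eq]
    intro hcon
    obtain ⟨i, hi⟩ := hcon hxΩ
    exact hxn i (by simp [hE, hi])
  have hcovF : volume (Ω \ ⋃ i, F i) = 0 := by
    refine null_of_le_tendsto_zero (f := fun l => 0 + (M:ℝ≥0∞) * (2 * (2⁻¹:ℝ≥0∞) ^ l)) ?_ ?_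
    · have := ENNReal.Tendsto.const_mul (a := (M:ℝ≥0∞)) hpow0
        (Or.inr (ENNReal.natCast_ne_top M))
      simpa using this
    · intro l
      have hsub : Ω \ ⋃ i, F i ⊆ (Ω \ ⋃ i, E (φ l) i) ∪ ⋃ i, (E (φ l) i ∆ F i) := by
        rintro x ⟨hxΩ, hxF⟩
        simp only [Set.mem_iUnion, not_exists] at hxF
        by_cases hex : ∃ i, x ∈ E (φ l) i
        · obtain ⟨i, hi⟩ := hex
          exact Or.inr (Set.mem_iUnion.mpr ⟨i, Set.mem_symmDiff.mpr (Or.inl ⟨hi, hxF i⟩)⟩)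
        · push_neg at hex
          exact Or.inl ⟨hxΩ, by simpa using hex⟩
      calc volume (Ω \ ⋃ i, F i)
          ≤ volume ((Ω \ ⋃ i, E (φ l) i) ∪ ⋃ i, (E (φ l) i ∆ F i)) := measure_mono hsub
        _ ≤ volume (Ω \ ⋃ i, E (φ l) i) + volume (⋃ i, (E (φ l) i ∆ F i)) :=
            measure_union_le _ _
        _ ≤ 0 + (M:ℝ≥0∞) * (2 * (2⁻¹:ℝ≥0∞) ^ l) := by
            refine add_le_add (le_of_eq (hcovE (φ l))) ?_
            refine (measure_iUnion_le _).trans ?_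
            rw [tsum_fintype]
            calc (∑ i, volume (E (φ l) i ∆ F i)) ≤ Finset.univ.card • (2 * (2⁻¹:ℝ≥0∞) ^ l) :=
                  Finset.sum_le_card_nsmul _ _ _ fun i _ => hkey i l
              _ = (M:ℝ≥0∞) * (2 * (2⁻¹:ℝ≥0∞) ^ l) := by
                  rw [nsmul_eq_mul]; simp
  -- prioritized disjointification of the limit sets
  set G : Fin M → Set (EuclideanSpace ℝ (Fin d)) :=
    fun i => (F i ∩ Ω) \ ⋃ j, ⋃ (_ : j < i), F j with hG
  have hGm : ∀ i, MeasurableSet (G i) := fun i =>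
    ((hFm i).inter hΩm).diff
      (MeasurableSet.iUnion fun j => MeasurableSet.iUnion fun _ => hFm j)
  have hGsubF : ∀ i, G i ⊆ F i := fun i => Set.diff_subset.trans Set.inter_subset_left
  have hGsubΩ : ∀ i, G i ⊆ Ω := fun i => Set.diff_subset.trans Set.inter_subset_right
  have hGdisj : ∀ i j : Fin M, i ≠ j → ∀ x, x ∈ G i → x ∈ G j → False := by
    intro i j hij x hxi hxj
    rcases lt_or_gt_of_ne hij with h | h
    · exact hxj.2 (Set.mem_iUnion.mpr ⟨i, Set.mem_iUnion.mpr ⟨h, hGsubF i hxi⟩⟩)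
    · exact hxi.2 (Set.mem_iUnion.mpr ⟨j, Set.mem_iUnion.mpr ⟨h, hGsubF j hxj⟩⟩)
  set wl : EuclideanSpace ℝ (Fin d) → ℝ :=
    fun x => ∑ i, (G i).indicator (fun _ => (wv i : ℝ)) x with hwl
  have hwm : Measurable wl := by
    refine Finset.measurable_sum _ fun i _ => ?_
    exact Measurable.indicator measurable_const (hGm i)
  have hwG : ∀ (i : Fin M) (x), x ∈ G i → wl x = wv i := by
    intro i x hx
    show (∑ i', (G i').indicator (fun _ => ((wv i' : ℝ))) x) = (wv i : ℝ)
    rw [Finset.sum_eq_single i]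
    · rw [Set.indicator_of_mem hx]
    · intro j _ hji
      exact Set.indicator_of_notMem (fun hxj => hGdisj j i hji x hxj hx) _
    · intro h; exact absurd (Finset.mem_univ i) h
  have hw0 : ∀ x, (∀ i, x ∉ G i) → wl x = 0 := fun x hx => by
    show (∑ i', (G i').indicator (fun _ => ((wv i' : ℝ))) x) = 0
    exact Finset.sum_eq_zero fun i _ => Set.indicator_of_notMem (hx i) _
  have hGsubW : ∀ i, G i ⊆ wl ⁻¹' {(wv i : ℝ)} := fun i x hx => by
    simp only [Set.mem_preimage, Set.mem_singleton_iff]; exact hwG i x hx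
  have houtΩ : ∀ x, x ∉ Ω → wl x = 0 := fun x hx =>
    hw0 x fun i hxG => hx (hGsubΩ i hxG)
  have hΩG : volume (Ω \ ⋃ i, G i) = 0 := by
    refine measure_mono_null ?_ hcovF
    rintro x ⟨hxΩ, hxG⟩
    simp only [Set.mem_iUnion, not_exists] at hxG
    refine ⟨hxΩ, ?_⟩
    simp only [Set.mem_iUnion, not_exists]
    intro i hxF
    obtain ⟨i0, hi0mem, hi0min⟩ := Finset.exists_min_image
      (Finset.univ.filter fun i' => x ∈ F i') id
      ⟨i, Finset.mem_filter.mpr ⟨Finset.mem_univ i, hxF⟩⟩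
    have hxF0 : x ∈ F i0 := (Finset.mem_filter.mp hi0mem).2
    refine hxG i0 ⟨⟨hxF0, hxΩ⟩, ?_⟩
    intro hmem
    obtain ⟨j, hj⟩ := Set.mem_iUnion.mp hmem
    obtain ⟨hjlt, hxFj⟩ := Set.mem_iUnion.mp hj
    exact absurd hjlt (not_lt.mpr (hi0min j (Finset.mem_filter.mpr ⟨Finset.mem_univ j, hxFj⟩)))
  have hpairs : ∀ i : Fin M, volume (⋃ j, ⋃ (_ : j ≠ i), F i ∩ F j) = 0 := fun i =>
    measure_iUnion_null fun j => measure_iUnion_null fun hji => hFdisj i j (Ne.symm hji)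
  have hWF : ∀ i : Fin M, volume (F i ∆ (wl ⁻¹' {(wv i : ℝ)})) = 0 := by
    intro i
    by_cases h0 : (wv i : ℝ) = 0
    · have hFcompl : Ωᶜ ⊆ F i := by
        intro x hx
        refine Set.mem_iUnion.mpr ⟨0, ?_⟩
        simp only [Set.mem_iInter]
        intro l _
        simp only [hE, Set.mem_preimage, Set.mem_singleton_iff]
        rw [(hfeas (φ l)).2.1 x hx, h0]
      refine measure_mono_null (fun x hx => ?_) (measure_union_null (hpairs i) hΩG)
      rcases Set.mem_symmDiff.mp hx with ⟨hxF, hxW⟩ | ⟨hxW, hxF⟩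
      · simp only [Set.mem_preimage, Set.mem_singleton_iff] at hxW
        by_cases hex : ∃ j, x ∈ G j
        · obtain ⟨j, hj⟩ := hex
          have hne : j ≠ i := fun h => hxW (by rw [h] at hj; exact hwG i x hj)
          exact Or.inl (Set.mem_iUnion.mpr ⟨j, Set.mem_iUnion.mpr ⟨hne,
            ⟨hxF, hGsubF j hj⟩⟩⟩)
        · push_neg at hex
          exact absurd (hw0 x hex) (by rw [h0] at hxW; exact hxW)
      · simp only [Set.mem_preimage, Set.mem_singleton_iff] at hxW
        have hxΩ : x ∈ Ω := by
          by_contra hxΩ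
          exact hxF (hFcompl hxΩ)
        refine Or.inr ⟨hxΩ, ?_⟩
        simp only [Set.mem_iUnion, not_exists]
        intro j hxG
        have hji : j = i := hcast j i (by rw [← hwG j x hxG, hxW])
        exact hxF (hGsubF i (hji ▸ hxG))
    · have hWG : wl ⁻¹' {(wv i : ℝ)} = G i := by
        apply Set.Subset.antisymm
        · intro x hx
          simp only [Set.mem_preimage, Set.mem_singleton_iff] at hx
          by_cases hex : ∃ j, x ∈ G j
          · obtain ⟨j, hj⟩ := hex
            have hji : j = i := hcast j i (by rw [← hwG j x hj, hx])
            exact hji ▸ hj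
          · push_neg at hex
            exact absurd ((hw0 x hex).symm.trans hx).symm h0
        · exact hGsubW i
      rw [hWG]
      have hFiΩ : F i ⊆ Ω := by
        intro x hx
        obtain ⟨J, hJ⟩ := Set.mem_iUnion.mp hx
        simp only [Set.mem_iInter] at hJ
        have hxE : x ∈ E (φ J) i := hJ J le_rfl
        by_contra hxΩ
        simp only [hE, Set.mem_preimage, Set.mem_singleton_iff] at hxE
        rw [(hfeas (φ J)).2.1 x hxΩ] at hxE
        exact h0 hxE.symm
      refine measure_mono_null (fun x hx => ?_) (hpairs i)
      rcases Set.mem_symmDiff.mp hx with ⟨hxF, hxG⟩ | ⟨hxG, hxF⟩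
      · have hxΩ : x ∈ Ω := hFiΩ hxF
        have hmem : x ∈ ⋃ j, ⋃ (_ : j < i), F j := by
          by_contra hno
          exact hxG ⟨⟨hxF, hxΩ⟩, hno⟩
        obtain ⟨j, hj⟩ := Set.mem_iUnion.mp hmem
        obtain ⟨hjlt, hxFj⟩ := Set.mem_iUnion.mp hj
        exact Set.mem_iUnion.mpr ⟨j, Set.mem_iUnion.mpr ⟨ne_of_lt hjlt, ⟨hxF, hxFj⟩⟩⟩
      · exact absurd (hGsubF i hxG) hxF
  -- convergence of level sets to those of wl
  have hWtend : ∀ i, Tendsto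
      (fun j => volume ((E (φ j) i) ∆ (wl ⁻¹' {(wv i : ℝ)}))) atTop (𝓝 0) := by
    intro i
    have hb : ∀ j, volume (E (φ j) i ∆ (wl ⁻¹' {(wv i : ℝ)}))
        ≤ volume (E (φ j) i ∆ F i) := by
      intro j
      calc volume (E (φ j) i ∆ (wl ⁻¹' {(wv i : ℝ)}))
          ≤ volume (E (φ j) i ∆ F i) + volume (F i ∆ (wl ⁻¹' {(wv i : ℝ)})) :=
            measure_symmDiff_le _ _ _
        _ = volume (E (φ j) i ∆ F i) := by rw [hWF i, add_zero]
    exact tendsto_of_tendsto_of_tendsto_of_le_of_le tendsto_const_nhds (htendF i)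
      (fun j => zero_le) hb
  -- feasibility of the limit
  have hfeaslim : Feasible d M Ω wv wl := by
    refine ⟨hwm, houtΩ, ?_⟩
    rw [ae_restrict_iff' hΩm, ae_iff]
    refine measure_mono_null ?_ hΩG
    intro x hx
    simp only [Set.mem_setOf_eq] at hx
    push_neg at hx
    obtain ⟨hxΩ, hxv⟩ := hx
    refine ⟨hxΩ, ?_⟩
    simp only [Set.mem_iUnion, not_exists]
    intro i hxG
    exact hxv i (hwG i x hxG)
  -- L¹ convergence
  have hL1 : Tendsto (fun j => ∫⁻ x, ENNReal.ofReal |w (φ j) x - wl x|) atTop (𝓝 0) := by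
    set C : ℝ≥0∞ := ENNReal.ofReal (2 * ∑ i, |(wv i : ℝ)|) with hC
    have habs : ∀ x, |wl x| ≤ ∑ i, |(wv i : ℝ)| := by
      intro x
      by_cases hex : ∃ i, x ∈ G i
      · obtain ⟨i, hi⟩ := hex
        rw [hwG i x hi]
        exact Finset.single_le_sum (f := fun i' => |(wv i' : ℝ)|)
          (fun i' _ => abs_nonneg _) (Finset.mem_univ i)
      · push_neg at hex
        rw [hw0 x hex, abs_zero]
        exact Finset.sum_nonneg fun i' _ => abs_nonneg _
    have hptw : ∀ j, ∀ᵐ x, ENNReal.ofReal |w (φ j) x - wl x|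
        ≤ ∑ i, (E (φ j) i ∆ (wl ⁻¹' {(wv i : ℝ)})).indicator (fun _ => C) x := by
      intro j
      have hae := (hfeas (φ j)).2.2
      rw [ae_restrict_iff' hΩm] at hae
      filter_upwards [hae] with x hx
      by_cases hxΩ : x ∈ Ω
      · obtain ⟨i, hi⟩ := hx hxΩ
        by_cases hxW : x ∈ wl ⁻¹' {(wv i : ℝ)}
        · have heq : w (φ j) x = wl x := by
            simp only [Set.mem_preimage, Set.mem_singleton_iff] at hxW
            rw [hi, hxW]
          rw [heq, sub_self, abs_zero, ENNReal.ofReal_zero]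
          exact zero_le
        · have hxE : x ∈ E (φ j) i := by
            simp only [hE, Set.mem_preimage, Set.mem_singleton_iff]; exact hi
          have hxsd : x ∈ E (φ j) i ∆ (wl ⁻¹' {(wv i : ℝ)}) :=
            Set.mem_symmDiff.mpr (Or.inl ⟨hxE, hxW⟩)
          calc ENNReal.ofReal |w (φ j) x - wl x| ≤ C := by
                rw [hC]
                apply ENNReal.ofReal_le_ofReal
                rw [hi]
                have h1 : |(wv i : ℝ) - wl x| ≤ |(wv i : ℝ)| + |wl x| := abs_sub _ _
                have h2 := habs x
                have h3 : |(wv i : ℝ)| ≤ ∑ i', |(wv i' : ℝ)| :=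
                  Finset.single_le_sum (f := fun i' => |(wv i' : ℝ)|)
                    (fun i' _ => abs_nonneg _) (Finset.mem_univ i)
                linarith
            _ = (E (φ j) i ∆ (wl ⁻¹' {(wv i : ℝ)})).indicator (fun _ => C) x :=
                (Set.indicator_of_mem hxsd (fun _ => C)).symm
            _ ≤ ∑ i', (E (φ j) i' ∆ (wl ⁻¹' {(wv i' : ℝ)})).indicator (fun _ => C) x :=
                Finset.single_le_sum
                  (f := fun i' => (E (φ j) i' ∆ (wl ⁻¹' {(wv i' : ℝ)})).indicator
                    (fun _ => C) x)
                  (fun i' _ => zero_le) (Finset.mem_univ i)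
      · rw [(hfeas (φ j)).2.1 x hxΩ, houtΩ x hxΩ, sub_zero, abs_zero, ENNReal.ofReal_zero]
        exact zero_le
    have hWsd_m : ∀ j i, MeasurableSet (E (φ j) i ∆ (wl ⁻¹' {(wv i : ℝ)})) :=
      fun j i => (hEm (φ j) i).symmDiff (hwm (measurableSet_singleton _))
    have hint : ∀ j, (∫⁻ x, ENNReal.ofReal |w (φ j) x - wl x|)
        ≤ ∑ i, C * volume (E (φ j) i ∆ (wl ⁻¹' {(wv i : ℝ)})) := by
      intro j
      calc (∫⁻ x, ENNReal.ofReal |w (φ j) x - wl x|)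
          ≤ ∫⁻ x, ∑ i, (E (φ j) i ∆ (wl ⁻¹' {(wv i : ℝ)})).indicator (fun _ => C) x :=
            lintegral_mono_ae (hptw j)
        _ = ∑ i, ∫⁻ x, (E (φ j) i ∆ (wl ⁻¹' {(wv i : ℝ)})).indicator (fun _ => C) x :=
            lintegral_finset_sum _ fun i _ => measurable_const.indicator (hWsd_m j i)
        _ = ∑ i, C * volume (E (φ j) i ∆ (wl ⁻¹' {(wv i : ℝ)})) := by
            refine Finset.sum_congr rfl fun i _ => ?_
            rw [lintegral_indicator (hWsd_m j i), setLIntegral_const]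
    have hlim : Tendsto (fun j => ∑ i, C * volume (E (φ j) i ∆ (wl ⁻¹' {(wv i : ℝ)})))
        atTop (𝓝 0) := by
      have h0 : ∀ i : Fin M, Tendsto
          (fun j => C * volume (E (φ j) i ∆ (wl ⁻¹' {(wv i : ℝ)}))) atTop (𝓝 0) := by
        intro i
        have := ENNReal.Tendsto.const_mul (a := C) (hWtend i)
          (Or.inr ENNReal.ofReal_ne_top)
        simpa using this
      have := tendsto_finset_sum Finset.univ (fun i (_ : i ∈ Finset.univ) => h0 i)
      simpa using this
    exact tendsto_of_tendsto_of_tendsto_of_le_of_le tendsto_const_nhds hlim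
      (fun j => zero_le) hint
  -- coverage of Ω by the limit level sets
  have hcoverW : volume (Ω \ ⋃ i, wl ⁻¹' {(wv i : ℝ)}) = 0 := by
    refine measure_mono_null ?_ hΩG
    rintro x ⟨hxΩ, hxW⟩
    refine ⟨hxΩ, fun hxG => hxW ?_⟩
    obtain ⟨i, hi⟩ := Set.mem_iUnion.mp hxG
    exact Set.mem_iUnion.mpr ⟨i, hGsubW i hi⟩
  have hdisjW : ∀ i j : Fin M, i ≠ j →
      volume ((wl ⁻¹' {(wv i : ℝ)}) ∩ (wl ⁻¹' {(wv j : ℝ)})) = 0 := by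
    intro i j hij
    have hempty : (wl ⁻¹' {(wv i : ℝ)}) ∩ (wl ⁻¹' {(wv j : ℝ)}) = ∅ := by
      rw [Set.eq_empty_iff_forall_notMem]
      rintro x ⟨hxi, hxj⟩
      simp only [Set.mem_preimage, Set.mem_singleton_iff] at hxi hxj
      exact hij (hcast i j (hxi.symm.trans hxj))
    rw [hempty, measure_empty]
  exact ⟨φ, hφmono, wl, hfeaslim, hWtend, hL1, hcoverW, hdisjW⟩
end

section
/- Let Ω ⊆ ℝ^d be bounded, W ⊂ ℤ finite, α ∈ (0,1), η > 0, Δ > 0. Let v^n → v strictly in ℱ (i.e., v^n → v in L^1 and R_α(v^n) → R_α(v)) and g^n ⇀ g weakly in L²(Ω). If w^n ∈ ℱ converge to w ∈ ℱ in L^1(Ω) with sup_n P_α((w^n)^{-1}({w_i})) < ∞ for each i, and ‖w^n − v^n‖_{L^1} ≤ Δ for all n, then ‖w − v‖_{L^1} ≤ Δ and (g, w − v)_{L²} + η R_α(w) − η R_α(v) ≤ liminf_n [(g^n, w^n − v^n)_{L²} + η R_α(w^n) − η R_α(v^n)]. -/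
open MeasureTheory Filter
open scoped ENNReal NNReal symmDiff

/-- The fractional-perimeter regularizer
`R_α(w) = (1−α) Σ_i |w_i| P_α(w⁻¹({w_i}))`. -/
noncomputable def Reg (d M : ℕ) (α : ℝ) (wv : Fin M → ℤ)
    (w : EuclideanSpace ℝ (Fin d) → ℝ) : ℝ≥0∞ :=
  ∑ i, ((wv i).natAbs : ℝ≥0∞) * ENNReal.ofReal (1 - α) * fracPer d α (w ⁻¹' {(wv i : ℝ)})

section Aux

variable {d M : ℕ} {α : ℝ} {Ω : Set (EuclideanSpace ℝ (Fin d))} {wv : Fin M → ℤ}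

lemma abs_sub' (a b : ℝ) : |a - b| ≤ |a| + |b| := by
  rw [sub_eq_add_neg]
  exact (abs_add_le a (-b)).trans (by rw [abs_neg])

lemma feas_ae_bound (hΩm : MeasurableSet Ω) {w : EuclideanSpace ℝ (Fin d) → ℝ}
    (hw : Feasible d M Ω wv w) :
    ∀ᵐ x ∂(volume : Measure (EuclideanSpace ℝ (Fin d))), |w x| ≤ ∑ i, |(wv i : ℝ)| := by
  have hd : (volume : Measure (EuclideanSpace ℝ (Fin d)))
      = volume.restrict Ω + volume.restrict Ωᶜ :=
    (Measure.restrict_add_restrict_compl hΩm).symm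
  rw [hd, ae_add_measure_iff]
  constructor
  · filter_upwards [hw.2.2] with x hx
    obtain ⟨i, hi⟩ := hx
    rw [hi]
    exact Finset.single_le_sum (f := fun j => |(wv j : ℝ)|) (fun j _ => abs_nonneg _) (Finset.mem_univ i)
  · rw [ae_restrict_iff' hΩm.compl]
    refine Filter.Eventually.of_forall fun x hx => ?_
    rw [hw.2.1 x hx, abs_zero]
    exact Finset.sum_nonneg fun j _ => abs_nonneg _

lemma feas_ae_int (hΩm : MeasurableSet Ω) {w : EuclideanSpace ℝ (Fin d) → ℝ}
    (hw : Feasible d M Ω wv w) :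
    ∀ᵐ x ∂(volume : Measure (EuclideanSpace ℝ (Fin d))), ∃ k : ℤ, w x = (k : ℝ) := by
  have hd : (volume : Measure (EuclideanSpace ℝ (Fin d)))
      = volume.restrict Ω + volume.restrict Ωᶜ :=
    (Measure.restrict_add_restrict_compl hΩm).symm
  rw [hd, ae_add_measure_iff]
  constructor
  · filter_upwards [hw.2.2] with x hx
    obtain ⟨i, hi⟩ := hx
    exact ⟨wv i, hi⟩
  · rw [ae_restrict_iff' hΩm.compl]
    refine Filter.Eventually.of_forall fun x hx => ⟨0, by rw [hw.2.1 x hx, Int.cast_zero]⟩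

lemma feas_memL2 (hΩm : MeasurableSet Ω) (hΩb : Bornology.IsBounded Ω)
    {w : EuclideanSpace ℝ (Fin d) → ℝ} (hw : Feasible d M Ω wv w) :
    MemLp w 2 (volume : Measure (EuclideanSpace ℝ (Fin d))) := by
  have hwi : w = Ω.indicator w := by
    funext x
    by_cases hx : x ∈ Ω
    · rw [Set.indicator_of_mem hx]
    · rw [Set.indicator_of_notMem hx, hw.2.1 x hx]
  rw [hwi, memLp_indicator_iff_restrict hΩm]
  haveI : IsFiniteMeasure ((volume : Measure (EuclideanSpace ℝ (Fin d))).restrict Ω) :=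
    ⟨by rw [Measure.restrict_apply_univ]; exact hΩb.measure_lt_top⟩
  refine MemLp.of_bound hw.1.aestronglyMeasurable (∑ i, |(wv i : ℝ)|) ?_
  filter_upwards [hw.2.2] with x hx
  obtain ⟨i, hi⟩ := hx
  rw [Real.norm_eq_abs, hi]
  exact Finset.single_le_sum (f := fun j => |(wv j : ℝ)|) (fun j _ => abs_nonneg _) (Finset.mem_univ i)

noncomputable def kernel (d : ℕ) (α : ℝ) :
    EuclideanSpace ℝ (Fin d) × EuclideanSpace ℝ (Fin d) → ℝ≥0∞ :=
  fun p => ENNReal.ofReal (‖p.1 - p.2‖ ^ (-((d : ℝ) + α)))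

lemma kernel_meas : Measurable (kernel d α) := by
  unfold kernel; fun_prop

noncomputable def regFn (d M : ℕ) (α : ℝ) (wv : Fin M → ℤ)
    (w : EuclideanSpace ℝ (Fin d) → ℝ)
    (p : EuclideanSpace ℝ (Fin d) × EuclideanSpace ℝ (Fin d)) : ℝ≥0∞ :=
  ∑ i, ((wv i).natAbs : ℝ≥0∞) * ENNReal.ofReal (1 - α) *
    (2 * Set.indicator ((w ⁻¹' {((wv i : ℤ) : ℝ)}) ×ˢ (w ⁻¹' {((wv i : ℤ) : ℝ)})ᶜ)
      (kernel d α) p)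

lemma regFn_meas {w : EuclideanSpace ℝ (Fin d) → ℝ} (hw : Measurable w) :
    Measurable (regFn d M α wv w) := by
  refine Finset.measurable_sum _ fun i _ => ?_
  exact ((kernel_meas.indicator
    ((hw (measurableSet_singleton _)).prod (hw (measurableSet_singleton _)).compl)).const_mul
      2).const_mul _

lemma regFn_congr {u u' : EuclideanSpace ℝ (Fin d) → ℝ} {x y : EuclideanSpace ℝ (Fin d)}
    (h1 : u x = u' x) (h2 : u y = u' y) :
    regFn d M α wv u (x, y) = regFn d M α wv u' (x, y) := by
  classical
  refine Finset.sum_congr rfl fun i _ => ?_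
  have hiff : ((x, y) ∈ (u ⁻¹' {((wv i : ℤ) : ℝ)}) ×ˢ (u ⁻¹' {((wv i : ℤ) : ℝ)})ᶜ) ↔
      ((x, y) ∈ (u' ⁻¹' {((wv i : ℤ) : ℝ)}) ×ˢ (u' ⁻¹' {((wv i : ℤ) : ℝ)})ᶜ) := by
    simp only [Set.mem_prod, Set.mem_preimage, Set.mem_compl_iff, Set.mem_singleton_iff, h1, h2]
  rw [Set.indicator_apply, Set.indicator_apply, if_congr hiff rfl rfl]

lemma fracPer_eq {E : Set (EuclideanSpace ℝ (Fin d))} (hE : MeasurableSet E) :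
    fracPer d α E = 2 * ∫⁻ p, ((E ×ˢ Eᶜ).indicator (kernel d α)) p
      ∂((volume : Measure (EuclideanSpace ℝ (Fin d))).prod volume) := by
  rw [fracPer]
  congr 1
  rw [lintegral_prod _ ((kernel_meas.indicator (hE.prod hE.compl)).aemeasurable)]
  rw [← lintegral_indicator hE]
  refine lintegral_congr fun x => ?_
  by_cases hx : x ∈ E
  · rw [Set.indicator_of_mem hx, ← lintegral_indicator hE.compl]
    refine lintegral_congr fun y => ?_
    by_cases hy : y ∈ Eᶜ
    · rw [Set.indicator_of_mem hy, Set.indicator_of_mem (Set.mem_prod.2 ⟨hx, hy⟩)]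
      rfl
    · rw [Set.indicator_of_notMem hy,
        Set.indicator_of_notMem (fun h => hy (Set.mem_prod.1 h).2)]
  · rw [Set.indicator_of_notMem hx]
    have h0 : ∀ y, ((E ×ˢ Eᶜ).indicator (kernel d α)) (x, y) = 0 := fun y =>
      Set.indicator_of_notMem (fun h => hx (Set.mem_prod.1 h).1) _
    simp [h0]

lemma Reg_eq {w : EuclideanSpace ℝ (Fin d) → ℝ} (hw : Measurable w) :
    Reg d M α wv w = ∫⁻ p, regFn d M α wv w p
      ∂((volume : Measure (EuclideanSpace ℝ (Fin d))).prod volume) := by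
  unfold Reg regFn
  rw [lintegral_finset_sum]
  · refine Finset.sum_congr rfl fun i _ => ?_
    rw [fracPer_eq (hw (measurableSet_singleton _)),
      lintegral_const_mul _ ((kernel_meas.indicator
        ((hw (measurableSet_singleton _)).prod (hw (measurableSet_singleton _)).compl)).const_mul 2),
      lintegral_const_mul _ (kernel_meas.indicator
        ((hw (measurableSet_singleton _)).prod (hw (measurableSet_singleton _)).compl))]
  · intro i _
    exact ((kernel_meas.indicator
      ((hw (measurableSet_singleton _)).prod (hw (measurableSet_singleton _)).compl)).const_mul
        2).const_mul _

lemma tendsto_eLpNorm_two {X : Type*} [MeasurableSpace X] (μ : Measure X)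
    (f : ℕ → X → ℝ) (B : ℝ) (hm : ∀ n, Measurable (f n))
    (hb : ∀ n, ∀ᵐ x ∂μ, |f n x| ≤ B)
    (h1 : Tendsto (fun n => ∫⁻ x, ENNReal.ofReal |f n x| ∂μ) atTop (nhds 0)) :
    Tendsto (fun n => eLpNorm (f n) 2 μ) atTop (nhds 0) := by
  have key : ∀ n, (∫⁻ x, (‖f n x‖₊ : ℝ≥0∞) ^ (2 : ℝ) ∂μ)
      ≤ ENNReal.ofReal B * ∫⁻ x, ENNReal.ofReal |f n x| ∂μ := by
    intro n
    calc (∫⁻ x, (‖f n x‖₊ : ℝ≥0∞) ^ (2 : ℝ) ∂μ)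
        ≤ ∫⁻ x, ENNReal.ofReal B * ENNReal.ofReal |f n x| ∂μ := by
          refine lintegral_mono_ae ?_
          filter_upwards [hb n] with x hx
          rw [← enorm_eq_nnnorm, Real.enorm_eq_ofReal_abs, show (2 : ℝ) = ((2 : ℕ) : ℝ) by norm_num,
            ENNReal.rpow_natCast, pow_two]
          exact mul_le_mul_left (ENNReal.ofReal_le_ofReal hx) _
      _ = ENNReal.ofReal B * ∫⁻ x, ENNReal.ofReal |f n x| ∂μ :=
          lintegral_const_mul _ (ENNReal.measurable_ofReal.comp (hm n).abs)
  have h2 : Tendsto (fun n => ∫⁻ x, (‖f n x‖₊ : ℝ≥0∞) ^ (2 : ℝ) ∂μ) atTop (nhds 0) := by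
    have h3 := ENNReal.Tendsto.const_mul h1 (Or.inr ENNReal.ofReal_ne_top)
      (a := ENNReal.ofReal B)
    rw [mul_zero] at h3
    exact tendsto_of_tendsto_of_tendsto_of_le_of_le tendsto_const_nhds h3
      (fun n => zero_le) key
  have h3 : ∀ n, eLpNorm (f n) 2 μ
      = (∫⁻ x, (‖f n x‖₊ : ℝ≥0∞) ^ (2 : ℝ) ∂μ) ^ (1 / 2 : ℝ) := by
    intro n
    rw [eLpNorm_eq_lintegral_rpow_enorm_toReal two_ne_zero ENNReal.ofNat_ne_top]; simp_rw [enorm_eq_nnnorm]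
    norm_num
  have h4 := h2.ennrpow_const (1 / 2)
  rw [show ((0 : ℝ≥0∞) ^ (1 / 2 : ℝ)) = 0 by
    simp [ENNReal.zero_rpow_of_pos]] at h4
  exact h4.congr fun n => (h3 n).symm
lemma reg_lsc (hΩm : MeasurableSet Ω) {w : EuclideanSpace ℝ (Fin d) → ℝ}
    {wseq : ℕ → EuclideanSpace ℝ (Fin d) → ℝ}
    (hw : Feasible d M Ω wv w) (hwn : ∀ n, Feasible d M Ω wv (wseq n))
    (hL1 : Tendsto (fun n => ∫⁻ x, ENNReal.ofReal |wseq n x - w x|) atTop (nhds 0)) :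
    Reg d M α wv w ≤ liminf (fun n => Reg d M α wv (wseq n)) atTop := by
  refine (le_liminf_iff (by isBoundedDefault) (by isBoundedDefault)).2 fun y hy => ?_
  by_contra hcon
  rw [Filter.not_eventually] at hcon
  obtain ⟨φ, hφ, hφle⟩ :=
    Filter.extraction_of_frequently_atTop (hcon.mono fun n hn => not_lt.1 hn)
  -- convergence in measure
  have heqel : ∀ n, eLpNorm (wseq n - w) 1 volume = ∫⁻ x, ENNReal.ofReal |wseq n x - w x| := by
    intro n
    rw [eLpNorm_one_eq_lintegral_enorm]
    exact lintegral_congr fun x => by rw [Pi.sub_apply, Real.enorm_eq_ofReal_abs]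
  have heL : Tendsto (fun n => eLpNorm (wseq n - w) 1 volume) atTop (nhds 0) :=
    hL1.congr fun n => (heqel n).symm
  have hTIM := tendstoInMeasure_of_tendsto_eLpNorm one_ne_zero
    (fun n => (hwn n).1.aestronglyMeasurable) hw.1.aestronglyMeasurable heL
  have hTIMφ : TendstoInMeasure volume (fun k => wseq (φ k)) atTop w :=
    fun ε hε => (hTIM ε hε).comp hφ.tendsto_atTop
  obtain ⟨ψ, hψ, hae⟩ := hTIMφ.exists_seq_tendsto_ae
  -- a.e. eventual equality
  have hint : ∀ᵐ x ∂(volume : Measure (EuclideanSpace ℝ (Fin d))),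
      (∀ n, ∃ k : ℤ, wseq n x = (k : ℝ)) ∧ (∃ k : ℤ, w x = (k : ℝ)) :=
    ((ae_all_iff.2 fun n => feas_ae_int hΩm (hwn n)).and (feas_ae_int hΩm hw))
  have haeq : ∀ᵐ x ∂(volume : Measure (EuclideanSpace ℝ (Fin d))),
      ∀ᶠ k in atTop, wseq (φ (ψ k)) x = w x := by
    filter_upwards [hae, hint] with x hx hx2
    obtain ⟨hxn, k0, hk0⟩ := hx2
    have hev : ∀ᶠ k in atTop, wseq (φ (ψ k)) x ∈ Metric.ball (w x) 1 :=
      hx (Metric.ball_mem_nhds _ one_pos)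
    filter_upwards [hev] with k hk
    obtain ⟨a, ha⟩ := hxn (φ (ψ k))
    rw [Metric.mem_ball, Real.dist_eq, ha, hk0] at hk
    have h5 : ((|a - k0| : ℤ) : ℝ) < 1 := by
      rw [Int.cast_abs, Int.cast_sub]; exact hk
    have h6 : |a - k0| < 1 := by exact_mod_cast h5
    have h7 : a = k0 := sub_eq_zero.1 (Int.abs_lt_one_iff.1 h6)
    rw [ha, hk0, h7]
  -- lift to product
  have prodlift : ∀ S : Set (EuclideanSpace ℝ (Fin d)), volume S = 0 →
      ((volume : Measure (EuclideanSpace ℝ (Fin d))).prod volume)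
        {p | p.1 ∈ S ∨ p.2 ∈ S} = 0 := by
    intro S hS
    have h1 : {p : EuclideanSpace ℝ (Fin d) × EuclideanSpace ℝ (Fin d) |
        p.1 ∈ S ∨ p.2 ∈ S} ⊆ (S ×ˢ Set.univ) ∪ (Set.univ ×ˢ S) := by
      rintro p (h | h)
      · exact Or.inl ⟨h, trivial⟩
      · exact Or.inr ⟨trivial, h⟩
    refine measure_mono_null h1 (measure_union_null ?_ ?_) <;>
      rw [Measure.prod_prod] <;> simp [hS]
  have haeqp : ∀ᵐ p ∂((volume : Measure (EuclideanSpace ℝ (Fin d))).prod volume),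
      ∀ᶠ k in atTop, regFn d M α wv (wseq (φ (ψ k))) p = regFn d M α wv w p := by
    have hN := ae_iff.1 haeq
    have hsub : {p : EuclideanSpace ℝ (Fin d) × EuclideanSpace ℝ (Fin d) |
        ¬ ((∀ᶠ k in atTop, wseq (φ (ψ k)) p.1 = w p.1) ∧
           (∀ᶠ k in atTop, wseq (φ (ψ k)) p.2 = w p.2))} ⊆
        {p | p.1 ∈ {x | ¬ ∀ᶠ k in atTop, wseq (φ (ψ k)) x = w x} ∨
             p.2 ∈ {x | ¬ ∀ᶠ k in atTop, wseq (φ (ψ k)) x = w x}} := by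
      intro p hp
      exact not_and_or.1 hp
    have hP : ∀ᵐ p ∂((volume : Measure (EuclideanSpace ℝ (Fin d))).prod volume),
        (∀ᶠ k in atTop, wseq (φ (ψ k)) p.1 = w p.1) ∧
        (∀ᶠ k in atTop, wseq (φ (ψ k)) p.2 = w p.2) :=
      ae_iff.2 (measure_mono_null hsub (prodlift _ hN))
    filter_upwards [hP] with p hp
    obtain ⟨h1, h2⟩ := hp
    filter_upwards [h1, h2] with k hk1 hk2
    obtain ⟨x, y⟩ := p
    exact regFn_congr hk1 hk2
  -- Fatou
  have hchain : Reg d M α wv w ≤ y := by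
    calc Reg d M α wv w
        = ∫⁻ p, regFn d M α wv w p
            ∂((volume : Measure (EuclideanSpace ℝ (Fin d))).prod volume) := Reg_eq hw.1
      _ = ∫⁻ p, liminf (fun k => regFn d M α wv (wseq (φ (ψ k))) p) atTop
            ∂((volume : Measure (EuclideanSpace ℝ (Fin d))).prod volume) := by
          refine lintegral_congr_ae (haeqp.mono fun p hp => ?_)
          show regFn d M α wv w p
            = liminf (fun k => regFn d M α wv (wseq (φ (ψ k))) p) atTop
          rw [liminf_congr hp, liminf_const]
      _ ≤ liminf (fun k => ∫⁻ p, regFn d M α wv (wseq (φ (ψ k))) p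
            ∂((volume : Measure (EuclideanSpace ℝ (Fin d))).prod volume)) atTop :=
          lintegral_liminf_le fun k => regFn_meas (hwn (φ (ψ k))).1
      _ = liminf (fun k => Reg d M α wv (wseq (φ (ψ k)))) atTop :=
          liminf_congr (Filter.Eventually.of_forall fun k => (Reg_eq (hwn _).1).symm)
      _ ≤ y := liminf_le_of_frequently_le (Frequently.of_forall fun k => hφle (ψ k))
  exact lt_irrefl y (lt_of_lt_of_le hy hchain)
end Aux

lemma ennreal_coe_ereal_eq (x : ℝ≥0∞) (hx : x ≠ ⊤) :
    (x : EReal) = ((x.toReal : ℝ) : EReal) := by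
  rw [← EReal.toReal_coe_ennreal (x := x)]
  exact (EReal.coe_toReal (by simpa [EReal.coe_ennreal_eq_top_iff] using hx)
    (EReal.coe_ennreal_ne_bot x)).symm


set_option maxHeartbeats 2000000 in
/-- The liminf part of the Γ-convergence of the trust-region functionals: strict convergence
`vⁿ → v`, weak `L²`-convergence `gⁿ ⇀ g`, `L¹`-convergence `wⁿ → w` with uniformly bounded
level-set fractional perimeters, and `‖wⁿ − vⁿ‖_{L¹} ≤ Δ` imply `‖w − v‖_{L¹} ≤ Δ` and the
liminf inequality for the functional values. -/
theorem tr_subproblem_liminf (d M : ℕ) (α η Δ : ℝ)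
    (hα : α ∈ Set.Ioo (0 : ℝ) 1) (hη : 0 < η) (hΔ : 0 < Δ)
    (Ω : Set (EuclideanSpace ℝ (Fin d))) (hΩm : MeasurableSet Ω)
    (hΩb : Bornology.IsBounded Ω)
    (wv : Fin M → ℤ) (hinj : Function.Injective wv)
    (vseq : ℕ → EuclideanSpace ℝ (Fin d) → ℝ) (vlim : EuclideanSpace ℝ (Fin d) → ℝ)
    (wseq : ℕ → EuclideanSpace ℝ (Fin d) → ℝ) (wlim : EuclideanSpace ℝ (Fin d) → ℝ)
    (hvfeas : ∀ n, Feasible d M Ω wv (vseq n)) (hvlim : Feasible d M Ω wv vlim)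
    (hwfeas : ∀ n, Feasible d M Ω wv (wseq n)) (hwlim : Feasible d M Ω wv wlim)
    (hvL1 : Tendsto (fun n => ∫⁻ x, ENNReal.ofReal |vseq n x - vlim x|) atTop (nhds 0))
    (hvR : Tendsto (fun n => Reg d M α wv (vseq n)) atTop (nhds (Reg d M α wv vlim)))
    (gseq : ℕ → EuclideanSpace ℝ (Fin d) → ℝ) (g : EuclideanSpace ℝ (Fin d) → ℝ)
    (hg2 : MemLp g 2 volume) (hgn2 : ∀ n, MemLp (gseq n) 2 volume)
    (hweak : ∀ h : EuclideanSpace ℝ (Fin d) → ℝ, MemLp h 2 volume →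
      Tendsto (fun n => ∫ x, gseq n x * h x) atTop (nhds (∫ x, g x * h x)))
    (hwL1 : Tendsto (fun n => ∫⁻ x, ENNReal.ofReal |wseq n x - wlim x|) atTop (nhds 0))
    (hwP : ∀ i, ∃ Cb : ℝ≥0∞, Cb < ⊤ ∧
      ∀ n, fracPer d α ((wseq n) ⁻¹' {(wv i : ℝ)}) ≤ Cb)
    (hΔn : ∀ n, ∫⁻ x, ENNReal.ofReal |wseq n x - vseq n x| ≤ ENNReal.ofReal Δ) :
    (∫⁻ x, ENNReal.ofReal |wlim x - vlim x|) ≤ ENNReal.ofReal Δ ∧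
    ((∫ x, g x * (wlim x - vlim x) : ℝ) : EReal)
        + ((ENNReal.ofReal η * Reg d M α wv wlim : ℝ≥0∞) : EReal)
        - ((ENNReal.ofReal η * Reg d M α wv vlim : ℝ≥0∞) : EReal)
      ≤ liminf (fun n =>
          ((∫ x, gseq n x * (wseq n x - vseq n x) : ℝ) : EReal)
            + ((ENNReal.ofReal η * Reg d M α wv (wseq n) : ℝ≥0∞) : EReal)
            - ((ENNReal.ofReal η * Reg d M α wv (vseq n) : ℝ≥0∞) : EReal)) atTop := by
  have mabs : ∀ (f g' : EuclideanSpace ℝ (Fin d) → ℝ), Measurable f → Measurable g' →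
      Measurable fun x => ENNReal.ofReal |f x - g' x| := fun f g' hf hg' =>
    ENNReal.measurable_ofReal.comp ((hf.sub hg').abs)
  -- Part 1
  have part1 : (∫⁻ x, ENNReal.ofReal |wlim x - vlim x|) ≤ ENNReal.ofReal Δ := by
    have key : ∀ n, (∫⁻ x, ENNReal.ofReal |wlim x - vlim x|)
        ≤ ENNReal.ofReal Δ + ((∫⁻ x, ENNReal.ofReal |wseq n x - wlim x|)
          + ∫⁻ x, ENNReal.ofReal |vseq n x - vlim x|) := by
      intro n
      have hb : ∀ x, ENNReal.ofReal |wlim x - vlim x|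
          ≤ ENNReal.ofReal |wseq n x - vseq n x|
            + (ENNReal.ofReal |wseq n x - wlim x| + ENNReal.ofReal |vseq n x - vlim x|) := by
        intro x
        have h1 : |wlim x - vlim x| ≤ |wlim x - wseq n x| + |wseq n x - vlim x| :=
          abs_sub_le _ _ _
        have h2 : |wseq n x - vlim x| ≤ |wseq n x - vseq n x| + |vseq n x - vlim x| :=
          abs_sub_le _ _ _
        rw [abs_sub_comm (wlim x) (wseq n x)] at h1
        calc ENNReal.ofReal |wlim x - vlim x|
            ≤ ENNReal.ofReal (|wseq n x - vseq n x|
              + (|wseq n x - wlim x| + |vseq n x - vlim x|)) :=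
              ENNReal.ofReal_le_ofReal (by linarith)
          _ ≤ _ := by
              rw [ENNReal.ofReal_add (abs_nonneg _) (add_nonneg (abs_nonneg _) (abs_nonneg _)),
                ENNReal.ofReal_add (abs_nonneg _) (abs_nonneg _)]
      calc (∫⁻ x, ENNReal.ofReal |wlim x - vlim x|)
          ≤ ∫⁻ x, ENNReal.ofReal |wseq n x - vseq n x|
            + (ENNReal.ofReal |wseq n x - wlim x| + ENNReal.ofReal |vseq n x - vlim x|) :=
            lintegral_mono hb
        _ = (∫⁻ x, ENNReal.ofReal |wseq n x - vseq n x|)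
            + ((∫⁻ x, ENNReal.ofReal |wseq n x - wlim x|)
              + ∫⁻ x, ENNReal.ofReal |vseq n x - vlim x|) := by
            rw [lintegral_add_left (mabs _ _ (hwfeas n).1 (hvfeas n).1),
              lintegral_add_left (mabs _ _ (hwfeas n).1 hwlim.1)]
        _ ≤ _ := add_le_add_left (hΔn n) _
    have hlim : Tendsto (fun n => ENNReal.ofReal Δ
        + ((∫⁻ x, ENNReal.ofReal |wseq n x - wlim x|)
          + ∫⁻ x, ENNReal.ofReal |vseq n x - vlim x|)) atTop (nhds (ENNReal.ofReal Δ)) := by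
      have := tendsto_const_nhds (x := ENNReal.ofReal Δ) (f := atTop (α := ℕ)) |>.add
        (hwL1.add hvL1)
      simpa using this
    exact ge_of_tendsto hlim (Filter.Eventually.of_forall key)
  refine ⟨part1, ?_⟩
  -- lsc of Reg along wseq
  have hwRlsc : Reg d M α wv wlim ≤ liminf (fun n => Reg d M α wv (wseq n)) atTop :=
    reg_lsc hΩm hwlim hwfeas hwL1
  -- uniform bound on Reg (wseq n)
  choose Cb hCblt hCble using hwP
  set C' : ℝ≥0∞ := ∑ i, ((wv i).natAbs : ℝ≥0∞) * ENNReal.ofReal (1 - α) * Cb i with hC'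
  have hC'ne : C' ≠ ⊤ := by
    refine (ENNReal.sum_lt_top.2 fun i _ => ?_).ne
    exact ENNReal.mul_lt_top
      (ENNReal.mul_lt_top (ENNReal.natCast_lt_top _) ENNReal.ofReal_lt_top) (hCblt i)
  have hRegwn : ∀ n, Reg d M α wv (wseq n) ≤ C' := fun n =>
    Finset.sum_le_sum fun i _ => mul_le_mul_right (hCble i n) _
  have hRegwlim_ne : Reg d M α wv wlim ≠ ⊤ :=
    ne_top_of_le_ne_top hC'ne (hwRlsc.trans
      (liminf_le_of_frequently_le (Frequently.of_forall hRegwn)))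
  -- convergence of the pairing
  have hmemg : ∀ n, MemLp (gseq n) 2 (volume : Measure (EuclideanSpace ℝ (Fin d))) := hgn2
  have hmemh0 : MemLp (fun x => wlim x - vlim x) 2
      (volume : Measure (EuclideanSpace ℝ (Fin d))) :=
    (feas_memL2 hΩm hΩb hwlim).sub (feas_memL2 hΩm hΩb hvlim)
  have hmemφ : ∀ n, MemLp (fun x => (wseq n x - vseq n x) - (wlim x - vlim x)) 2
      (volume : Measure (EuclideanSpace ℝ (Fin d))) := fun n =>
    ((feas_memL2 hΩm hΩb (hwfeas n)).sub (feas_memL2 hΩm hΩb (hvfeas n))).sub hmemh0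
  set T : ℕ → (Lp ℝ 2 (volume : Measure (EuclideanSpace ℝ (Fin d)))) →L[ℝ] ℝ :=
    fun n => innerSL ℝ ((hgn2 n).toLp (gseq n)) with hT
  have hTapp : ∀ n (f : Lp ℝ 2 (volume : Measure (EuclideanSpace ℝ (Fin d)))),
      T n f = ∫ x, gseq n x * f x := by
    intro n f
    have h1 : T n f = inner ℝ ((hgn2 n).toLp (gseq n)) f := rfl
    rw [h1, L2.inner_def]
    refine integral_congr_ae ?_
    filter_upwards [(hgn2 n).coeFn_toLp] with x hx
    rw [hx]
    simp [RCLike.inner_apply, starRingEnd_apply, mul_comm]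
  obtain ⟨C0, hC0⟩ : ∃ C0, ∀ n, ‖T n‖ ≤ C0 := by
    refine banach_steinhaus fun f => ?_
    have hconv : Tendsto (fun n => T n f) atTop (nhds (∫ x, g x * f x)) :=
      (hweak _ (Lp.memLp f)).congr fun n => (hTapp n f).symm
    obtain ⟨C, hC⟩ := hconv.norm.bddAbove_range
    exact ⟨C, fun n => hC ⟨n, rfl⟩⟩
  -- L² convergence of φ n
  set B : ℝ := ∑ i, |(wv i : ℝ)| with hB
  have hB0 : 0 ≤ B := Finset.sum_nonneg fun i _ => abs_nonneg _
  have hφbd : ∀ n, ∀ᵐ x ∂(volume : Measure (EuclideanSpace ℝ (Fin d))),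
      |(wseq n x - vseq n x) - (wlim x - vlim x)| ≤ 4 * B := by
    intro n
    filter_upwards [feas_ae_bound hΩm (hwfeas n), feas_ae_bound hΩm (hvfeas n),
      feas_ae_bound hΩm hwlim, feas_ae_bound hΩm hvlim] with x h1 h2 h3 h4
    have e1 : |(wseq n x - vseq n x) - (wlim x - vlim x)|
        ≤ |wseq n x - vseq n x| + |wlim x - vlim x| := abs_sub' _ _
    have e2 : |wseq n x - vseq n x| ≤ |wseq n x| + |vseq n x| := abs_sub' _ _
    have e3 : |wlim x - vlim x| ≤ |wlim x| + |vlim x| := abs_sub' _ _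
    linarith
  have hφL1 : Tendsto (fun n => ∫⁻ x,
      ENNReal.ofReal |(wseq n x - vseq n x) - (wlim x - vlim x)|) atTop (nhds 0) := by
    have hbd : ∀ n, (∫⁻ x, ENNReal.ofReal |(wseq n x - vseq n x) - (wlim x - vlim x)|)
        ≤ (∫⁻ x, ENNReal.ofReal |wseq n x - wlim x|)
          + ∫⁻ x, ENNReal.ofReal |vseq n x - vlim x| := by
      intro n
      calc (∫⁻ x, ENNReal.ofReal |(wseq n x - vseq n x) - (wlim x - vlim x)|)
          ≤ ∫⁻ x, ENNReal.ofReal |wseq n x - wlim x|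
            + ENNReal.ofReal |vseq n x - vlim x| := by
            refine lintegral_mono fun x => ?_
            have h1 : |(wseq n x - vseq n x) - (wlim x - vlim x)|
                ≤ |wseq n x - wlim x| + |vseq n x - vlim x| := by
              have : (wseq n x - vseq n x) - (wlim x - vlim x)
                  = (wseq n x - wlim x) - (vseq n x - vlim x) := by ring
              rw [this]
              exact abs_sub' _ _
            calc ENNReal.ofReal |(wseq n x - vseq n x) - (wlim x - vlim x)|
                ≤ ENNReal.ofReal (|wseq n x - wlim x| + |vseq n x - vlim x|) :=
                  ENNReal.ofReal_le_ofReal h1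
              _ ≤ _ := ENNReal.ofReal_add_le
        _ = _ := lintegral_add_left (mabs _ _ (hwfeas n).1 hwlim.1) _
    have hlim0 := hwL1.add hvL1
    rw [add_zero] at hlim0
    exact tendsto_of_tendsto_of_tendsto_of_le_of_le tendsto_const_nhds hlim0
      (fun n => zero_le) hbd
  have hφ2 : Tendsto (fun n => eLpNorm
      (fun x => (wseq n x - vseq n x) - (wlim x - vlim x)) 2
      (volume : Measure (EuclideanSpace ℝ (Fin d)))) atTop (nhds 0) :=
    tendsto_eLpNorm_two _ _ (4 * B)
      (fun n => (((hwfeas n).1.sub (hvfeas n).1).sub (hwlim.1.sub hvlim.1)))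
      hφbd hφL1
  have hφnorm : Tendsto (fun n => ‖(hmemφ n).toLp _‖) atTop (nhds 0) := by
    have h1 : Tendsto (fun n => (eLpNorm
        (fun x => (wseq n x - vseq n x) - (wlim x - vlim x)) 2
        (volume : Measure (EuclideanSpace ℝ (Fin d)))).toReal) atTop (nhds 0) := by
      have := (ENNReal.tendsto_toReal (by simp)).comp hφ2
      exact this
    exact h1.congr fun n => (Lp.norm_toLp _ _).symm
  have hsplit : ∀ n, (∫ x, gseq n x * (wseq n x - vseq n x))
      = T n ((hmemφ n).toLp _) + T n (hmemh0.toLp _) := by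
    intro n
    rw [← map_add, hTapp]
    refine integral_congr_ae ?_
    filter_upwards [Lp.coeFn_add ((hmemφ n).toLp _) (hmemh0.toLp _),
      (hmemφ n).coeFn_toLp, hmemh0.coeFn_toLp] with x h1 h2 h3
    rw [h1, Pi.add_apply, h2, h3]
    ring
  have haconv : Tendsto (fun n => ∫ x, gseq n x * (wseq n x - vseq n x)) atTop
      (nhds (∫ x, g x * (wlim x - vlim x))) := by
    have h1 : Tendsto (fun n => T n ((hmemφ n).toLp _)) atTop (nhds 0) := by
      refine squeeze_zero_norm (a := fun n => C0 * ‖(hmemφ n).toLp _‖) (fun n => ?_) ?_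
      · exact ((T n).le_opNorm _).trans
          (mul_le_mul_of_nonneg_right (hC0 n) (norm_nonneg _))
      · have := hφnorm.const_mul C0
        simpa using this
    have h2 : Tendsto (fun n => T n (hmemh0.toLp _)) atTop
        (nhds (∫ x, g x * (wlim x - vlim x))) := by
      refine (hweak _ hmemh0).congr fun n => ?_
      rw [hTapp]
      refine integral_congr_ae ?_
      filter_upwards [hmemh0.coeFn_toLp] with x hx
      rw [hx]
    have h3 := h1.add h2
    rw [zero_add] at h3
    exact h3.congr fun n => (hsplit n).symm
  -- endgame
  by_cases htop : Reg d M α wv vlim = ⊤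
  · have hc_top : ((ENNReal.ofReal η * Reg d M α wv vlim : ℝ≥0∞) : EReal) = ⊤ := by
      rw [htop, ENNReal.mul_top (ENNReal.ofReal_pos.2 hη).ne', EReal.coe_ennreal_top]
    rw [hc_top, EReal.sub_top]
    exact bot_le
  · have hofη_ne : (ENNReal.ofReal η : ℝ≥0∞) ≠ ⊤ := ENNReal.ofReal_ne_top
    have hcfin : ENNReal.ofReal η * Reg d M α wv vlim ≠ ⊤ :=
      ENNReal.mul_ne_top hofη_ne htop
    have hbfin : ENNReal.ofReal η * Reg d M α wv wlim ≠ ⊤ :=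
      ENNReal.mul_ne_top hofη_ne hRegwlim_ne
    have hRn_ne : ∀ n, Reg d M α wv (wseq n) ≠ ⊤ := fun n =>
      ne_top_of_le_ne_top hC'ne (hRegwn n)
    have hbn_ne : ∀ n, ENNReal.ofReal η * Reg d M α wv (wseq n) ≠ ⊤ := fun n =>
      ENNReal.mul_ne_top hofη_ne (hRn_ne n)
    -- c_n tends to c
    have hc_tend : Tendsto (fun n => ENNReal.ofReal η * Reg d M α wv (vseq n)) atTop
        (nhds (ENNReal.ofReal η * Reg d M α wv vlim)) :=
      ENNReal.Tendsto.const_mul hvR (Or.inr hofη_ne)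
    have hcR_tend : Tendsto (fun n => (ENNReal.ofReal η * Reg d M α wv (vseq n)).toReal)
        atTop (nhds ((ENNReal.ofReal η * Reg d M α wv vlim).toReal)) :=
      (ENNReal.tendsto_toReal hcfin).comp hc_tend
    have hcn_ne : ∀ᶠ n in atTop, ENNReal.ofReal η * Reg d M α wv (vseq n) ≠ ⊤ := by
      have hlt := hc_tend.eventually_lt_const
        (ENNReal.lt_add_right hcfin one_ne_zero)
      filter_upwards [hlt] with n hn
      exact ne_top_of_lt hn
    -- rewrite LHS into a real coercion
    rw [ennreal_coe_ereal_eq _ hbfin, ennreal_coe_ereal_eq _ hcfin,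
      ← EReal.coe_add, ← EReal.coe_sub]
    refine (le_liminf_iff (by isBoundedDefault) (by isBoundedDefault)).2 fun y hy => ?_
    obtain ⟨r, hyr, hrT⟩ := EReal.lt_iff_exists_real_btwn.1 hy
    have hrT' : r < (∫ x, g x * (wlim x - vlim x))
        + (ENNReal.ofReal η * Reg d M α wv wlim).toReal
        - (ENNReal.ofReal η * Reg d M α wv vlim).toReal := by exact_mod_cast hrT
    set ε : ℝ := ((∫ x, g x * (wlim x - vlim x))
        + (ENNReal.ofReal η * Reg d M α wv wlim).toReal
        - (ENNReal.ofReal η * Reg d M α wv vlim).toReal - r) / 3 with hε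
    have hεpos : 0 < ε := by rw [hε]; linarith
    have ev1 : ∀ᶠ n in atTop, (∫ x, g x * (wlim x - vlim x)) - ε
        < ∫ x, gseq n x * (wseq n x - vseq n x) :=
      haconv.eventually_const_lt (by linarith)
    have ev3 : ∀ᶠ n in atTop, (ENNReal.ofReal η * Reg d M α wv (vseq n)).toReal
        < (ENNReal.ofReal η * Reg d M α wv vlim).toReal + ε :=
      hcR_tend.eventually_lt_const (by linarith)
    have evb : ∀ᶠ n in atTop, (ENNReal.ofReal η * Reg d M α wv wlim).toReal - ε
        < (ENNReal.ofReal η * Reg d M α wv (wseq n)).toReal := by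
      by_cases hS0 : Reg d M α wv wlim = 0
      · refine Filter.Eventually.of_forall fun n => ?_
        have h0 : (ENNReal.ofReal η * Reg d M α wv wlim).toReal = 0 := by
          rw [hS0, mul_zero, ENNReal.toReal_zero]
        rw [h0]
        have := ENNReal.toReal_nonneg (a := ENNReal.ofReal η * Reg d M α wv (wseq n))
        linarith
      · have hSRpos : 0 < (Reg d M α wv wlim).toReal :=
          ENNReal.toReal_pos hS0 hRegwlim_ne
        set SR : ℝ := (Reg d M α wv wlim).toReal with hSR
        set δ : ℝ := min (ε / η) SR with hδ
        have hδpos : 0 < δ := lt_min (div_pos hεpos hη) hSRpos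
        have hδSR : δ ≤ SR := min_le_right _ _
        have hz' : ENNReal.ofReal (SR - δ / 2) < Reg d M α wv wlim := by
          rw [ENNReal.ofReal_lt_iff_lt_toReal (by linarith) hRegwlim_ne]
          rw [← hSR]
          linarith
        have hev := eventually_lt_of_lt_liminf (lt_of_lt_of_le hz' hwRlsc)
        filter_upwards [hev] with n hn
        have h7 : (ENNReal.ofReal (SR - δ / 2)).toReal
            < (Reg d M α wv (wseq n)).toReal :=
          (ENNReal.toReal_lt_toReal ENNReal.ofReal_ne_top (hRn_ne n)).2 hn
        rw [ENNReal.toReal_ofReal (by linarith)] at h7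
        have hb_eq : (ENNReal.ofReal η * Reg d M α wv wlim).toReal = η * SR := by
          rw [ENNReal.toReal_mul, ENNReal.toReal_ofReal hη.le]
        have hbn_eq : (ENNReal.ofReal η * Reg d M α wv (wseq n)).toReal
            = η * (Reg d M α wv (wseq n)).toReal := by
          rw [ENNReal.toReal_mul, ENNReal.toReal_ofReal hη.le]
        have hηδ : δ * η ≤ ε := by
          calc δ * η ≤ (ε / η) * η :=
                mul_le_mul_of_nonneg_right (min_le_left _ _) hη.le
            _ = ε := div_mul_cancel₀ _ hη.ne'
        rw [hb_eq, hbn_eq]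
        have h9 := mul_lt_mul_of_pos_left h7 hη
        nlinarith [h9, hηδ, hεpos, hη.le]
    filter_upwards [ev1, evb, ev3, hcn_ne] with n h1 h2 h3 h4
    rw [ennreal_coe_ereal_eq _ (hbn_ne n), ennreal_coe_ereal_eq _ h4,
      ← EReal.coe_add, ← EReal.coe_sub]
    refine hyr.trans ?_
    rw [EReal.coe_lt_coe_iff]
    rw [hε] at *
    linarith
end
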